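/- Let G be the group of order p^{2r+1}·2^n described in the context and let H be the subgroup generated by x, y₁, …, y_r, a. Then: (a) the commutator subgroup of H equals the subgroup generated by y₁, …, y_r; and (b) for a subgroup K of H, the pair (H,K) is a Shoda pair of G if and only if K is the subgroup generated by y₁, …, y_r and a^{2^j} for some j with 0 ≤ j ≤ n−1. -/

import Mathlib

open scoped Classical

namespace Paper

variable {G : Type*} [Group G] [Fintype G]

noncomputable instance : Fintype (Subgroup G) :=
  Fintype.ofInjective (fun H : Subgroup G => (H : Set G)) SetLike.coe_injective

/-- `M̂ = (1/|M|) ∑_{m ∈ M} m` in the rational group algebra `ℚ[G]`. -/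
noncomputable def hat (M : Subgroup G) : MonoidAlgebra ℚ G :=
  (Nat.card M : ℚ)⁻¹ • ∑ m : M, MonoidAlgebra.of ℚ G (m : G)

/-- `L` is a normal subgroup of `H` properly containing `K`. -/
def NormalOver (H K L : Subgroup G) : Prop :=
  L ≤ H ∧ K < L ∧ ∀ h ∈ H, ∀ g ∈ L, h⁻¹ * g * h ∈ L

/-- `L` is minimal among the normal subgroups of `H` properly containing `K`. -/
def MinimalOver (H K L : Subgroup G) : Prop :=
  NormalOver H K L ∧ ∀ L' : Subgroup G, NormalOver H K L' → L' ≤ L → L' = L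

/-- `ε(H,K) = K̂` if `H = K`, and otherwise `∏_L (K̂ - L̂)`, the product running over
the normal subgroups `L` of `H` minimal with respect to properly containing `K`
(all such factors commute pairwise, so the product is order-independent). -/
noncomputable def eps (H K : Subgroup G) : MonoidAlgebra ℚ G :=
  if H = K then hat K
  else (({L : Subgroup G | MinimalOver H K L}.toFinset).toList.map
    fun L => hat K - hat L).prod

/-- The subgroup `[H,g] = ⟨g⁻¹h⁻¹gh : h ∈ H⟩`. -/
def commSub (H : Subgroup G) (g : G) : Subgroup G :=
  Subgroup.closure {c : G | ∃ h ∈ H, c = g⁻¹ * h⁻¹ * g * h}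

/-- The quotient `H/K` is cyclic (elementwise formulation: some `h ∈ H` is such that
every `g ∈ H` lies in a coset `h^m K`). -/
def CyclicQuot (H K : Subgroup G) : Prop :=
  ∃ h ∈ H, ∀ g ∈ H, ∃ m : ℤ, (h ^ m)⁻¹ * g ∈ K

/-- `K` is normal in `H` (elementwise formulation). -/
def NormalIn (H K : Subgroup G) : Prop :=
  ∀ h ∈ H, ∀ g ∈ K, h⁻¹ * g * h ∈ K

/-- `(H,K)` is a Shoda pair of `G`. -/
def IsShodaPair (H K : Subgroup G) : Prop :=
  K ≤ H ∧ NormalIn H K ∧ CyclicQuot H K ∧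
    ∀ g : G, commSub H g ⊓ H ≤ K → g ∈ H

/-- `(H,K)` is a strong Shoda pair of `G`: conditions (SS1), (SS2), (SS3).
Maximal abelianness of `H/K` in `N_G(K)/K` is phrased via the Galois correspondence
between subgroups of `N_G(K)/K` and subgroups of `G` lying between `K` and `N_G(K)`. -/
def IsStrongShodaPair (H K : Subgroup G) : Prop :=
  -- (SS1): `H` is a normal subgroup of `N_G(K)`
  (H ≤ Subgroup.normalizer (K : Set G) ∧ ∀ g ∈ Subgroup.normalizer (K : Set G), ∀ h ∈ H, g⁻¹ * h * g ∈ H) ∧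
  -- (SS2): `H/K` is cyclic and a maximal abelian subgroup of `N_G(K)/K`
  (CyclicQuot H K ∧
    (∀ h₁ ∈ H, ∀ h₂ ∈ H, h₁⁻¹ * h₂⁻¹ * h₁ * h₂ ∈ K) ∧
    ∀ C : Subgroup G, K ≤ C → C ≤ Subgroup.normalizer (K : Set G) →
      (∀ c₁ ∈ C, ∀ c₂ ∈ C, c₁⁻¹ * c₂⁻¹ * c₁ * c₂ ∈ K) → H ≤ C → C = H) ∧
  -- (SS3): `ε(H,K)·(g⁻¹ ε(H,K) g) = 0` for `g ∉ N_G(K)`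
  (∀ g : G, g ∉ Subgroup.normalizer (K : Set G) →
    eps H K * (MonoidAlgebra.of ℚ G g⁻¹ * eps H K * MonoidAlgebra.of ℚ G g) = 0)


/-- The data of the group `G = P ⋊ D_{2^n}` of order `p^{2r+1}·2^n`: an odd prime
`p ≡ 1 (mod 4)`, `r ≥ 1`, `n ≥ 3` with `2^{n-1}` the exact power of `2` dividing
`p - 1`, an integer `k` of multiplicative order `2^{n-1}` modulo `p` with inverse `q`
modulo `p`, and generators `x, y₁, …, y_r, z₁, …, z_r, a, b` of `G` subject to the
listed relations (commutator convention `[u,v] = u⁻¹v⁻¹uv`). -/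
structure GData (G : Type*) [Group G] [Fintype G] where
  p : ℕ
  r : ℕ
  n : ℕ
  k : ℕ
  q : ℕ
  x : G
  y : Fin r → G
  z : Fin r → G
  a : G
  b : G
  hp : p.Prime
  hp4 : p % 4 = 1
  hr : 1 ≤ r
  hn : 3 ≤ n
  hdvd : 2 ^ (n - 1) ∣ p - 1
  hndvd : ¬ 2 ^ n ∣ p - 1
  hordk : orderOf ((k : ZMod p)) = 2 ^ (n - 1)
  hkq : ((k : ZMod p)) * (q : ZMod p) = 1
  hcard : Fintype.card G = p ^ (2 * r + 1) * 2 ^ n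
  hgen : Subgroup.closure (({x, a, b} : Set G) ∪ Set.range y ∪ Set.range z) = ⊤
  hxp : x ^ p = 1
  hyp : ∀ i, y i ^ p = 1
  hzp : ∀ i, z i ^ p = 1
  han : a ^ 2 ^ (n - 1) = 1
  hb2 : b ^ 2 = 1
  hxy : ∀ i, x⁻¹ * (y i)⁻¹ * x * y i = 1
  hxz : ∀ i, x⁻¹ * (z i)⁻¹ * x * z i = 1
  hyy : ∀ i j, (y i)⁻¹ * (y j)⁻¹ * y i * y j = 1
  hzz : ∀ i j, (z i)⁻¹ * (z j)⁻¹ * z i * z j = 1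
  hyz : ∀ i, (y i)⁻¹ * (z i)⁻¹ * y i * z i = x
  hyz' : ∀ i j, i ≠ j → (y i)⁻¹ * (z j)⁻¹ * y i * z j = 1
  hax : a⁻¹ * x⁻¹ * a * x = 1
  hay : ∀ i, a⁻¹ * (y i)⁻¹ * a * y i = (y i) ^ (1 - (k : ℤ))
  haz : ∀ i, a⁻¹ * (z i)⁻¹ * a * z i = (z i) ^ (1 - (q : ℤ))
  hbx : b⁻¹ * x⁻¹ * b * x = x ^ 2
  hby : ∀ i, b⁻¹ * (y i)⁻¹ * b * y i = z i * y i
  hbz : ∀ i, b⁻¹ * (z i)⁻¹ * b * z i = y i * z i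
  hba : b⁻¹ * a⁻¹ * b * a = a ^ 2

variable {G : Type*} [Group G] [Fintype G]

/-- The subgroup `P = ⟨x, y₁, …, y_r, z₁, …, z_r⟩` of `G`. -/
def GData.P (d : GData G) : Subgroup G :=
  Subgroup.closure (({d.x} : Set G) ∪ Set.range d.y ∪ Set.range d.z)

end Paper

namespace Paper

namespace SP

set_option linter.unusedSectionVars false

variable {G : Type*} [Group G] [Fintype G]

theorem comm_of_rel {u v : G} (h : u⁻¹ * v⁻¹ * u * v = 1) : Commute u v := by
  have h2 := congrArg (fun w => v * u * w) h
  simp only [mul_one] at h2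
  have : v * u * (u⁻¹ * v⁻¹ * u * v) = u * v := by group
  rw [this] at h2
  exact h2

theorem pow_congr {g : G} {N : ℕ} (hg : g ^ N = 1) {m m' : ℕ} (h : m ≡ m' [MOD N]) :
    g ^ m = g ^ m' :=
  pow_eq_pow_iff_modEq.mpr (h.of_dvd (orderOf_dvd_of_pow_eq_one hg))

theorem zpow_congr {g : G} {N : ℕ} (hg : g ^ N = 1) {m m' : ℤ} (h : m ≡ m' [ZMOD N]) :
    g ^ m = g ^ m' := by
  rw [zpow_eq_zpow_emod' m hg, zpow_eq_zpow_emod' m' hg, h]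

theorem conj_zpow' (c g : G) (m : ℤ) : (c * g * c⁻¹) ^ m = c * g ^ m * c⁻¹ := by
  rw [← MulAut.conj_apply, ← map_zpow, MulAut.conj_apply]

variable (d : GData G)

/-! ### Basic commutation relations -/

theorem cxy (i : Fin d.r) : Commute d.x (d.y i) := comm_of_rel (d.hxy i)
theorem cxz (i : Fin d.r) : Commute d.x (d.z i) := comm_of_rel (d.hxz i)
theorem cxa : Commute d.x d.a := (comm_of_rel d.hax).symm
theorem cyy (i j : Fin d.r) : Commute (d.y i) (d.y j) := comm_of_rel (d.hyy i j)
theorem czz (i j : Fin d.r) : Commute (d.z i) (d.z j) := comm_of_rel (d.hzz i j)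
theorem cyz' {i j : Fin d.r} (h : i ≠ j) : Commute (d.y i) (d.z j) :=
  comm_of_rel (d.hyz' i j h)

theorem binv : d.b⁻¹ = d.b := by
  have h := d.hb2
  rw [pow_two] at h
  exact inv_eq_of_mul_eq_one_right h

theorem bxb : d.b * d.x * d.b = d.x⁻¹ := by
  have h := d.hbx
  rw [binv] at h
  -- h : b * x⁻¹ * b * x = x ^ 2
  have h1 : d.b * d.x⁻¹ * d.b = d.x := by
    have := congrArg (fun w => w * d.x⁻¹) h
    simp only [mul_assoc] at this ⊢
    simpa [pow_two, mul_assoc] using this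
  have h2 := congrArg Inv.inv h1
  rw [show (d.b * d.x⁻¹ * d.b)⁻¹ = d.b⁻¹ * d.x * d.b⁻¹ by group] at h2
  rw [binv] at h2
  exact h2

theorem byb (i : Fin d.r) : d.b * d.y i * d.b = (d.z i)⁻¹ := by
  have h := d.hby i
  rw [binv] at h
  have h1 : d.b * (d.y i)⁻¹ * d.b = d.z i := by
    have := congrArg (fun w => w * (d.y i)⁻¹) h
    simpa [mul_assoc] using this
  have h2 := congrArg Inv.inv h1
  rw [show (d.b * (d.y i)⁻¹ * d.b)⁻¹ = d.b⁻¹ * d.y i * d.b⁻¹ by group] at h2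
  rw [binv] at h2
  exact h2

theorem bzb (i : Fin d.r) : d.b * d.z i * d.b = (d.y i)⁻¹ := by
  have h := d.hbz i
  rw [binv] at h
  have h1 : d.b * (d.z i)⁻¹ * d.b = d.y i := by
    have := congrArg (fun w => w * (d.z i)⁻¹) h
    simpa [mul_assoc] using this
  have h2 := congrArg Inv.inv h1
  rw [show (d.b * (d.z i)⁻¹ * d.b)⁻¹ = d.b⁻¹ * d.z i * d.b⁻¹ by group] at h2
  rw [binv] at h2
  exact h2

theorem bab : d.b * d.a * d.b = d.a⁻¹ := by
  have h := d.hba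
  rw [binv] at h
  have h1 : d.b * d.a⁻¹ * d.b = d.a := by
    have := congrArg (fun w => w * d.a⁻¹) h
    simp only [mul_assoc] at this ⊢
    simpa [pow_two, mul_assoc] using this
  have h2 := congrArg Inv.inv h1
  rw [show (d.b * d.a⁻¹ * d.b)⁻¹ = d.b⁻¹ * d.a * d.b⁻¹ by group] at h2
  rw [binv] at h2
  exact h2

theorem aya (i : Fin d.r) : d.a⁻¹ * d.y i * d.a = d.y i ^ (d.k : ℤ) := by
  have h := d.hay i
  have h1 : d.a⁻¹ * (d.y i)⁻¹ * d.a = d.y i ^ (-(d.k : ℤ)) := by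
    have h2 : d.a⁻¹ * ((d.y i)⁻¹ * d.a) = d.y i ^ (1 - (d.k : ℤ)) * (d.y i)⁻¹ := by
      have := congrArg (fun w => w * (d.y i)⁻¹) h
      simpa [mul_assoc] using this
    have h3 : d.a⁻¹ * (d.y i)⁻¹ * d.a = d.y i ^ (1 - (d.k : ℤ)) * (d.y i)⁻¹ := by
      rw [mul_assoc]; exact h2
    rw [h3, ← zpow_neg_one, ← zpow_add]
    congr 1
    ring
  calc d.a⁻¹ * d.y i * d.a = (d.a⁻¹ * (d.y i)⁻¹ * d.a)⁻¹ := by group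
  _ = d.y i ^ (d.k : ℤ) := by rw [h1, ← zpow_neg, neg_neg]

theorem aza (i : Fin d.r) : d.a⁻¹ * d.z i * d.a = d.z i ^ (d.q : ℤ) := by
  have h := d.haz i
  have h1 : d.a⁻¹ * (d.z i)⁻¹ * d.a = d.z i ^ (-(d.q : ℤ)) := by
    have h2 : d.a⁻¹ * ((d.z i)⁻¹ * d.a) = d.z i ^ (1 - (d.q : ℤ)) * (d.z i)⁻¹ := by
      have := congrArg (fun w => w * (d.z i)⁻¹) h
      simpa [mul_assoc] using this
    have h3 : d.a⁻¹ * (d.z i)⁻¹ * d.a = d.z i ^ (1 - (d.q : ℤ)) * (d.z i)⁻¹ := by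
      rw [mul_assoc]; exact h2
    rw [h3, ← zpow_neg_one, ← zpow_add]
    congr 1
    ring
  calc d.a⁻¹ * d.z i * d.a = (d.a⁻¹ * (d.z i)⁻¹ * d.a)⁻¹ := by group
  _ = d.z i ^ (d.q : ℤ) := by rw [h1, ← zpow_neg, neg_neg]

theorem kq_modeq : (d.k : ℤ) * d.q ≡ 1 [ZMOD d.p] := by
  have := d.hkq
  rw [show ((1 : ZMod d.p)) = ((1 : ℤ) : ZMod d.p) by push_cast; ring] at this
  rw [← ZMod.intCast_eq_intCast_iff]
  push_cast
  exact_mod_cast this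

theorem ay'a (i : Fin d.r) : d.a * d.y i * d.a⁻¹ = d.y i ^ (d.q : ℤ) := by
  have h1 : d.a⁻¹ * d.y i ^ (d.q : ℤ) * d.a = d.y i := by
    have : d.a⁻¹ * d.y i ^ (d.q : ℤ) * d.a = (d.a⁻¹ * d.y i * d.a) ^ (d.q : ℤ) := by
      rw [show d.a⁻¹ * d.y i * d.a = d.a⁻¹ * d.y i * (d.a⁻¹)⁻¹ by rw [inv_inv],
        conj_zpow', inv_inv]
    rw [this, aya, ← zpow_mul]
    calc d.y i ^ ((d.k : ℤ) * d.q) = d.y i ^ (1 : ℤ) :=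
      zpow_congr (d.hyp i) (kq_modeq d)
    _ = d.y i := zpow_one _
  calc d.a * d.y i * d.a⁻¹ = d.a * (d.a⁻¹ * d.y i ^ (d.q : ℤ) * d.a) * d.a⁻¹ := by rw [h1]
  _ = d.y i ^ (d.q : ℤ) := by group

theorem az'a (i : Fin d.r) : d.a * d.z i * d.a⁻¹ = d.z i ^ (d.k : ℤ) := by
  have h1 : d.a⁻¹ * d.z i ^ (d.k : ℤ) * d.a = d.z i := by
    have : d.a⁻¹ * d.z i ^ (d.k : ℤ) * d.a = (d.a⁻¹ * d.z i * d.a) ^ (d.k : ℤ) := by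
      rw [show d.a⁻¹ * d.z i * d.a = d.a⁻¹ * d.z i * (d.a⁻¹)⁻¹ by rw [inv_inv],
        conj_zpow', inv_inv]
    rw [this, aza, ← zpow_mul]
    have hm : d.z i ^ ((d.q : ℤ) * d.k) = d.z i ^ (1 : ℤ) := by
      refine zpow_congr (d.hzp i) ?_
      rw [mul_comm]; exact kq_modeq d
    rw [hm, zpow_one]
  calc d.a * d.z i * d.a⁻¹ = d.a * (d.a⁻¹ * d.z i ^ (d.k : ℤ) * d.a) * d.a⁻¹ := by rw [h1]
  _ = d.z i ^ (d.k : ℤ) := by group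

theorem zy (i : Fin d.r) : d.z i * d.y i = d.y i * d.z i * d.x⁻¹ := by
  have h := d.hyz i
  -- y⁻¹ z⁻¹ y z = x  ⇒  y z = z y x  ⇒  z y = y z x⁻¹
  have h2 : d.y i * d.z i = d.z i * d.y i * d.x := by
    have := congrArg (fun w => d.z i * d.y i * w) h
    have h3 : d.z i * d.y i * ((d.y i)⁻¹ * (d.z i)⁻¹ * d.y i * d.z i) = d.y i * d.z i := by
      group
    simpa [h3] using this
  rw [h2]; group

/-! ### Heisenberg relations with exponents -/

theorem yinv_z_y (i : Fin d.r) : (d.y i)⁻¹ * d.z i * d.y i = d.z i * d.x⁻¹ := by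
  rw [mul_assoc, zy]
  group

theorem y_z_yinv (i : Fin d.r) : d.y i * d.z i * (d.y i)⁻¹ = d.z i * d.x := by
  have h : d.y i * d.z i = d.z i * d.y i * d.x := by
    rw [zy]; group
  rw [h]
  have hc := (cxy d i).symm
  calc d.z i * d.y i * d.x * (d.y i)⁻¹ = d.z i * d.y i * (d.x * (d.y i)⁻¹) := by
        rw [mul_assoc]
  _ = d.z i * d.y i * ((d.y i)⁻¹ * d.x) := by rw [(hc.inv_left.symm).eq]
  _ = d.z i * d.x := by group

theorem ymzA (i : Fin d.r) (n : ℕ) :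
    ((d.y i)⁻¹) ^ n * d.z i * (d.y i) ^ n = d.z i * (d.x⁻¹) ^ n := by
  induction n with
  | zero => simp
  | succ n ih =>
    rw [pow_succ' (d.y i)⁻¹, pow_succ (d.y i), pow_succ' d.x⁻¹]
    have h1 : (d.y i)⁻¹ * (d.y i)⁻¹ ^ n * d.z i * ((d.y i) ^ n * d.y i)
        = (d.y i)⁻¹ * ((d.y i)⁻¹ ^ n * d.z i * (d.y i) ^ n) * d.y i := by group
    rw [h1, ih]
    have hcx : Commute ((d.x⁻¹) ^ n) (d.y i) := ((cxy d i).inv_left).pow_left n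
    have h2 : (d.y i)⁻¹ * (d.z i * (d.x⁻¹) ^ n) * d.y i
        = ((d.y i)⁻¹ * d.z i * d.y i) * (d.x⁻¹) ^ n := by
      have := hcx.eq
      calc (d.y i)⁻¹ * (d.z i * (d.x⁻¹) ^ n) * d.y i
          = (d.y i)⁻¹ * d.z i * ((d.x⁻¹) ^ n * d.y i) := by group
      _ = (d.y i)⁻¹ * d.z i * (d.y i * (d.x⁻¹) ^ n) := by rw [this]
      _ = ((d.y i)⁻¹ * d.z i * d.y i) * (d.x⁻¹) ^ n := by group
    rw [h2, yinv_z_y]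
    group

theorem ymzB (i : Fin d.r) (n : ℕ) :
    (d.y i) ^ n * d.z i * ((d.y i)⁻¹) ^ n = d.z i * d.x ^ n := by
  induction n with
  | zero => simp
  | succ n ih =>
    rw [pow_succ' (d.y i), pow_succ (d.y i)⁻¹, pow_succ' d.x]
    have h1 : d.y i * (d.y i) ^ n * d.z i * ((d.y i)⁻¹ ^ n * (d.y i)⁻¹)
        = d.y i * ((d.y i) ^ n * d.z i * ((d.y i)⁻¹) ^ n) * (d.y i)⁻¹ := by group
    rw [h1, ih]
    have hcx : Commute (d.x ^ n) ((d.y i)⁻¹) := ((cxy d i).pow_left n).inv_right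
    have h2 : d.y i * (d.z i * d.x ^ n) * (d.y i)⁻¹
        = (d.y i * d.z i * (d.y i)⁻¹) * d.x ^ n := by
      have := hcx.eq
      calc d.y i * (d.z i * d.x ^ n) * (d.y i)⁻¹
          = d.y i * d.z i * (d.x ^ n * (d.y i)⁻¹) := by group
      _ = d.y i * d.z i * ((d.y i)⁻¹ * d.x ^ n) := by rw [this]
      _ = (d.y i * d.z i * (d.y i)⁻¹) * d.x ^ n := by group
    rw [h2, y_z_yinv]
    group

theorem ymz (i : Fin d.r) (m : ℤ) :
    d.y i ^ (-m) * d.z i * d.y i ^ m = d.z i * d.x ^ (-m) := by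
  rcases Int.eq_nat_or_neg m with ⟨n, hn | hn⟩
  · subst hn
    calc d.y i ^ (-(n:ℤ)) * d.z i * d.y i ^ (n:ℤ)
        = ((d.y i)⁻¹) ^ n * d.z i * (d.y i) ^ n := by
          rw [zpow_neg, zpow_natCast, ← inv_pow]
    _ = d.z i * (d.x⁻¹) ^ n := ymzA d i n
    _ = d.z i * d.x ^ (-(n:ℤ)) := by rw [inv_pow, ← zpow_natCast, ← zpow_neg]
  · subst hn
    calc d.y i ^ (-(-(n:ℤ))) * d.z i * d.y i ^ (-(n:ℤ))
        = (d.y i) ^ n * d.z i * ((d.y i)⁻¹) ^ n := by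
          rw [neg_neg, zpow_natCast, zpow_neg, zpow_natCast, ← inv_pow]
    _ = d.z i * d.x ^ n := ymzB d i n
    _ = d.z i * d.x ^ (-(-(n:ℤ))) := by rw [neg_neg, zpow_natCast]

theorem ym_zc (i : Fin d.r) (m c : ℤ) :
    d.y i ^ (-m) * d.z i ^ c * d.y i ^ m = d.z i ^ c * d.x ^ (-(m * c)) := by
  have e : (d.y i ^ (-m))⁻¹ = d.y i ^ m := by rw [zpow_neg, inv_inv]
  have h1 := conj_zpow' (d.y i ^ (-m)) (d.z i) c
  rw [e] at h1
  rw [← h1, ymz d i m]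
  have hc : Commute (d.z i) (d.x ^ (-m)) := (cxz d i).symm.zpow_right _
  rw [hc.mul_zpow, ← zpow_mul]
  congr 1
  ring

theorem zc_ym (i : Fin d.r) (c m : ℤ) :
    d.z i ^ c * d.y i ^ m = d.y i ^ m * d.z i ^ c * d.x ^ (-(m * c)) := by
  have h := ym_zc d i m c
  calc d.z i ^ c * d.y i ^ m
      = d.y i ^ m * (d.y i ^ (-m) * d.z i ^ c * d.y i ^ m) := by
        rw [zpow_neg]; group
  _ = d.y i ^ m * d.z i ^ c * d.x ^ (-(m * c)) := by rw [h]; group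

/-! ### The products Yp and Zp -/

theorem noncommProd_eq_one {ι : Type*} (s : Finset ι) (f : ι → G) (comm)
    (h : ∀ j ∈ s, f j = 1) : s.noncommProd f comm = 1 := by
  rw [Finset.noncommProd_eq_pow_card s f comm 1 h, one_pow]

theorem ycomm (β : Fin d.r → ℤ) :
    ((Finset.univ : Finset (Fin d.r)) : Set (Fin d.r)).Pairwise
      (Function.onFun Commute fun i => d.y i ^ β i) :=
  fun i _ j _ _ => Commute.zpow_zpow (cyy d i j) _ _

theorem zcomm (γ : Fin d.r → ℤ) :
    ((Finset.univ : Finset (Fin d.r)) : Set (Fin d.r)).Pairwise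
      (Function.onFun Commute fun i => d.z i ^ γ i) :=
  fun i _ j _ _ => Commute.zpow_zpow (czz d i j) _ _

noncomputable def Yp (β : Fin d.r → ℤ) : G :=
  Finset.univ.noncommProd (fun i => d.y i ^ β i) (ycomm d β)

noncomputable def Zp (γ : Fin d.r → ℤ) : G :=
  Finset.univ.noncommProd (fun i => d.z i ^ γ i) (zcomm d γ)

theorem Yp_zero : Yp d 0 = 1 := by
  rw [Yp]
  exact noncommProd_eq_one _ _ _ (fun j _ => by simp)

theorem Zp_zero : Zp d 0 = 1 := by
  rw [Zp]
  exact noncommProd_eq_one _ _ _ (fun j _ => by simp)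

theorem Yp_add (β β' : Fin d.r → ℤ) : Yp d (β + β') = Yp d β * Yp d β' := by
  rw [Yp, Yp, Yp, ← Finset.noncommProd_mul_distrib _ _ (ycomm d β) (ycomm d β')
    (fun i _ j _ _ => Commute.zpow_zpow (cyy d i j) _ _)]
  exact Finset.noncommProd_congr rfl (fun i _ => by
    show d.y i ^ (β i + β' i) = d.y i ^ β i * d.y i ^ β' i
    exact zpow_add _ _ _) _

theorem Zp_add (γ γ' : Fin d.r → ℤ) : Zp d (γ + γ') = Zp d γ * Zp d γ' := by
  rw [Zp, Zp, Zp, ← Finset.noncommProd_mul_distrib _ _ (zcomm d γ) (zcomm d γ')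
    (fun i _ j _ _ => Commute.zpow_zpow (czz d i j) _ _)]
  exact Finset.noncommProd_congr rfl (fun i _ => by
    show d.z i ^ (γ i + γ' i) = d.z i ^ γ i * d.z i ^ γ' i
    exact zpow_add _ _ _) _

theorem commute_Yp {w : G} (hw : ∀ i, Commute w (d.y i)) (β : Fin d.r → ℤ) :
    Commute w (Yp d β) :=
  Finset.noncommProd_commute _ _ _ _ (fun i _ => (hw i).zpow_right _)

theorem commute_Zp {w : G} (hw : ∀ i, Commute w (d.z i)) (γ : Fin d.r → ℤ) :
    Commute w (Zp d γ) :=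
  Finset.noncommProd_commute _ _ _ _ (fun i _ => (hw i).zpow_right _)

theorem cx_Yp (β : Fin d.r → ℤ) : Commute d.x (Yp d β) := commute_Yp d (cxy d) β

theorem cx_Zp (γ : Fin d.r → ℤ) : Commute d.x (Zp d γ) := commute_Zp d (cxz d) γ

theorem Yp_mem {S : Subgroup G} (hS : ∀ i, d.y i ∈ S) (β : Fin d.r → ℤ) :
    Yp d β ∈ S :=
  Finset.noncommProd_induction _ _ _ (· ∈ S) (fun _ _ ha hb => mul_mem ha hb)
    (one_mem S) (fun i _ => zpow_mem (hS i) _)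

theorem Zp_mem {S : Subgroup G} (hS : ∀ i, d.z i ∈ S) (γ : Fin d.r → ℤ) :
    Zp d γ ∈ S :=
  Finset.noncommProd_induction _ _ _ (· ∈ S) (fun _ _ ha hb => mul_mem ha hb)
    (one_mem S) (fun i _ => zpow_mem (hS i) _)

theorem Yp_single (i : Fin d.r) (m : ℤ) : Yp d (Pi.single i m) = d.y i ^ m := by
  rw [Yp, ← Finset.noncommProd_erase_mul _ (Finset.mem_univ i) _ (ycomm d _)
    (fun j _ k _ _ => Commute.zpow_zpow (cyy d j k) _ _)]
  have h1 : ∀ c, (Finset.univ.erase i).noncommProd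
      (fun j => d.y j ^ (Pi.single i m : Fin d.r → ℤ) j) c = 1 :=
    fun c => noncommProd_eq_one _ _ c (fun j hj => by
      show d.y j ^ (Pi.single i m : Fin d.r → ℤ) j = 1
      rw [Pi.single_eq_of_ne (Finset.ne_of_mem_erase hj)]
      exact zpow_zero _)
  refine Eq.trans (congrArg (fun x => x * d.y i ^ (Pi.single i m : Fin d.r → ℤ) i) (h1 _)) ?_
  simp only [one_mul, Pi.single_eq_same]

theorem Zp_single (i : Fin d.r) (m : ℤ) : Zp d (Pi.single i m) = d.z i ^ m := by
  rw [Zp, ← Finset.noncommProd_erase_mul _ (Finset.mem_univ i) _ (zcomm d _)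
    (fun j _ k _ _ => Commute.zpow_zpow (czz d j k) _ _)]
  have h1 : ∀ c, (Finset.univ.erase i).noncommProd
      (fun j => d.z j ^ (Pi.single i m : Fin d.r → ℤ) j) c = 1 :=
    fun c => noncommProd_eq_one _ _ c (fun j hj => by
      show d.z j ^ (Pi.single i m : Fin d.r → ℤ) j = 1
      rw [Pi.single_eq_of_ne (Finset.ne_of_mem_erase hj)]
      exact zpow_zero _)
  refine Eq.trans (congrArg (fun x => x * d.z i ^ (Pi.single i m : Fin d.r → ℤ) i) (h1 _)) ?_
  simp only [one_mul, Pi.single_eq_same]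

/-! ### Conjugation of Yp and Zp -/

theorem a_conj_Yp (β : Fin d.r → ℤ) :
    d.a⁻¹ * Yp d β * d.a = Yp d (fun i => (d.k : ℤ) * β i) := by
  have h := Finset.map_noncommProd Finset.univ (fun i => d.y i ^ β i) (ycomm d β)
    (MulAut.conj d.a⁻¹)
  rw [MulAut.conj_apply, inv_inv] at h
  rw [Yp, Yp, h]
  refine Finset.noncommProd_congr rfl (fun i _ => ?_) _
  show MulAut.conj d.a⁻¹ (d.y i ^ β i) = d.y i ^ ((d.k : ℤ) * β i)
  rw [MulAut.conj_apply, inv_inv]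
  calc d.a⁻¹ * d.y i ^ β i * d.a
      = (d.a⁻¹ * d.y i * (d.a⁻¹)⁻¹) ^ β i := by rw [conj_zpow', inv_inv]
  _ = (d.y i ^ (d.k : ℤ)) ^ β i := by rw [inv_inv, aya]
  _ = d.y i ^ ((d.k : ℤ) * β i) := by rw [← zpow_mul]

theorem a_conj_Yp' (β : Fin d.r → ℤ) :
    d.a * Yp d β * d.a⁻¹ = Yp d (fun i => (d.q : ℤ) * β i) := by
  have h := Finset.map_noncommProd Finset.univ (fun i => d.y i ^ β i) (ycomm d β)
    (MulAut.conj d.a)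
  rw [MulAut.conj_apply] at h
  rw [Yp, Yp, h]
  refine Finset.noncommProd_congr rfl (fun i _ => ?_) _
  show MulAut.conj d.a (d.y i ^ β i) = d.y i ^ ((d.q : ℤ) * β i)
  rw [MulAut.conj_apply]
  calc d.a * d.y i ^ β i * d.a⁻¹
      = (d.a * d.y i * d.a⁻¹) ^ β i := by rw [conj_zpow']
  _ = (d.y i ^ (d.q : ℤ)) ^ β i := by rw [ay'a]
  _ = d.y i ^ ((d.q : ℤ) * β i) := by rw [← zpow_mul]

theorem a_conj_Zp (γ : Fin d.r → ℤ) :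
    d.a⁻¹ * Zp d γ * d.a = Zp d (fun i => (d.q : ℤ) * γ i) := by
  have h := Finset.map_noncommProd Finset.univ (fun i => d.z i ^ γ i) (zcomm d γ)
    (MulAut.conj d.a⁻¹)
  rw [MulAut.conj_apply, inv_inv] at h
  rw [Zp, Zp, h]
  refine Finset.noncommProd_congr rfl (fun i _ => ?_) _
  show MulAut.conj d.a⁻¹ (d.z i ^ γ i) = d.z i ^ ((d.q : ℤ) * γ i)
  rw [MulAut.conj_apply, inv_inv]
  calc d.a⁻¹ * d.z i ^ γ i * d.a
      = (d.a⁻¹ * d.z i * (d.a⁻¹)⁻¹) ^ γ i := by rw [conj_zpow', inv_inv]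
  _ = (d.z i ^ (d.q : ℤ)) ^ γ i := by rw [inv_inv, aza]
  _ = d.z i ^ ((d.q : ℤ) * γ i) := by rw [← zpow_mul]

theorem a_conj_Zp' (γ : Fin d.r → ℤ) :
    d.a * Zp d γ * d.a⁻¹ = Zp d (fun i => (d.k : ℤ) * γ i) := by
  have h := Finset.map_noncommProd Finset.univ (fun i => d.z i ^ γ i) (zcomm d γ)
    (MulAut.conj d.a)
  rw [MulAut.conj_apply] at h
  rw [Zp, Zp, h]
  refine Finset.noncommProd_congr rfl (fun i _ => ?_) _
  show MulAut.conj d.a (d.z i ^ γ i) = d.z i ^ ((d.k : ℤ) * γ i)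
  rw [MulAut.conj_apply]
  calc d.a * d.z i ^ γ i * d.a⁻¹
      = (d.a * d.z i * d.a⁻¹) ^ γ i := by rw [conj_zpow']
  _ = (d.z i ^ (d.k : ℤ)) ^ γ i := by rw [az'a]
  _ = d.z i ^ ((d.k : ℤ) * γ i) := by rw [← zpow_mul]

theorem b_conj_Yp (β : Fin d.r → ℤ) :
    d.b * Yp d β * d.b = Zp d (fun i => -β i) := by
  have h := Finset.map_noncommProd Finset.univ (fun i => d.y i ^ β i) (ycomm d β)
    (MulAut.conj d.b)
  rw [MulAut.conj_apply, binv] at h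
  rw [Yp, Zp, h]
  refine Finset.noncommProd_congr rfl (fun i _ => ?_) _
  show MulAut.conj d.b (d.y i ^ β i) = d.z i ^ (-β i)
  rw [MulAut.conj_apply, binv]
  calc d.b * d.y i ^ β i * d.b
      = (d.b * d.y i * d.b⁻¹) ^ β i := by rw [conj_zpow', binv]
  _ = ((d.z i)⁻¹) ^ β i := by rw [binv, byb]
  _ = d.z i ^ (-β i) := by rw [← zpow_neg_one, ← zpow_mul]; congr 1; ring

theorem b_conj_Zp (γ : Fin d.r → ℤ) :
    d.b * Zp d γ * d.b = Yp d (fun i => -γ i) := by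
  have h := Finset.map_noncommProd Finset.univ (fun i => d.z i ^ γ i) (zcomm d γ)
    (MulAut.conj d.b)
  rw [MulAut.conj_apply, binv] at h
  rw [Zp, Yp, h]
  refine Finset.noncommProd_congr rfl (fun i _ => ?_) _
  show MulAut.conj d.b (d.z i ^ γ i) = d.y i ^ (-γ i)
  rw [MulAut.conj_apply, binv]
  calc d.b * d.z i ^ γ i * d.b
      = (d.b * d.z i * d.b⁻¹) ^ γ i := by rw [conj_zpow', binv]
  _ = ((d.y i)⁻¹) ^ γ i := by rw [binv, bzb]
  _ = d.y i ^ (-γ i) := by rw [← zpow_neg_one, ← zpow_mul]; congr 1; ring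

theorem apow_conj_Yp (s : ℕ) (β : Fin d.r → ℤ) :
    d.a ^ s * Yp d β * (d.a ^ s)⁻¹ = Yp d (fun i => (d.q : ℤ) ^ s * β i) := by
  induction s with
  | zero => simp
  | succ s ih =>
    rw [pow_succ' d.a, mul_inv_rev]
    have h1 : d.a * d.a ^ s * Yp d β * ((d.a ^ s)⁻¹ * d.a⁻¹)
        = d.a * (d.a ^ s * Yp d β * (d.a ^ s)⁻¹) * d.a⁻¹ := by group
    rw [h1, ih, a_conj_Yp']
    congr 1
    funext i
    rw [pow_succ]
    ring

theorem apow_conj_Yp' (s : ℕ) (β : Fin d.r → ℤ) :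
    (d.a ^ s)⁻¹ * Yp d β * d.a ^ s = Yp d (fun i => (d.k : ℤ) ^ s * β i) := by
  induction s with
  | zero => simp
  | succ s ih =>
    rw [pow_succ d.a, mul_inv_rev]
    have h1 : d.a⁻¹ * (d.a ^ s)⁻¹ * Yp d β * (d.a ^ s * d.a)
        = d.a⁻¹ * ((d.a ^ s)⁻¹ * Yp d β * d.a ^ s) * d.a := by group
    rw [h1, ih, a_conj_Yp]
    congr 1
    funext i
    rw [pow_succ]
    ring

theorem apow_conj_Zp (s : ℕ) (γ : Fin d.r → ℤ) :
    d.a ^ s * Zp d γ * (d.a ^ s)⁻¹ = Zp d (fun i => (d.k : ℤ) ^ s * γ i) := by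
  induction s with
  | zero => simp
  | succ s ih =>
    rw [pow_succ' d.a, mul_inv_rev]
    have h1 : d.a * d.a ^ s * Zp d γ * ((d.a ^ s)⁻¹ * d.a⁻¹)
        = d.a * (d.a ^ s * Zp d γ * (d.a ^ s)⁻¹) * d.a⁻¹ := by group
    rw [h1, ih, a_conj_Zp']
    congr 1
    funext i
    rw [pow_succ]
    ring

theorem apow_conj_Zp' (s : ℕ) (γ : Fin d.r → ℤ) :
    (d.a ^ s)⁻¹ * Zp d γ * d.a ^ s = Zp d (fun i => (d.q : ℤ) ^ s * γ i) := by
  induction s with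
  | zero => simp
  | succ s ih =>
    rw [pow_succ d.a, mul_inv_rev]
    have h1 : d.a⁻¹ * (d.a ^ s)⁻¹ * Zp d γ * (d.a ^ s * d.a)
        = d.a⁻¹ * ((d.a ^ s)⁻¹ * Zp d γ * d.a ^ s) * d.a := by group
    rw [h1, ih, a_conj_Zp]
    congr 1
    funext i
    rw [pow_succ]
    ring

theorem azpow_reduce (s : ℤ) : ∃ s₀ : ℕ, d.a ^ s = d.a ^ s₀ := by
  refine ⟨(s % ((2 ^ (d.n - 1) : ℕ) : ℤ)).toNat, ?_⟩
  rw [zpow_eq_zpow_emod' s d.han, ← zpow_natCast]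
  congr 1
  exact (Int.toNat_of_nonneg (Int.emod_nonneg s (by positivity))).symm

theorem azpow_conj_Yp (s : ℤ) :
    ∃ m : ℤ, ∀ β : Fin d.r → ℤ,
      d.a ^ s * Yp d β * d.a ^ (-s) = Yp d (fun i => m * β i) := by
  obtain ⟨s₀, hs₀⟩ := azpow_reduce d s
  refine ⟨(d.q : ℤ) ^ s₀, fun β => ?_⟩
  rw [zpow_neg, hs₀, apow_conj_Yp]

theorem azpow_conj_Yp' (s : ℤ) :
    ∃ m : ℤ, ∀ β : Fin d.r → ℤ,
      d.a ^ (-s) * Yp d β * d.a ^ s = Yp d (fun i => m * β i) := by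
  obtain ⟨s₀, hs₀⟩ := azpow_reduce d s
  refine ⟨(d.k : ℤ) ^ s₀, fun β => ?_⟩
  rw [zpow_neg, hs₀, apow_conj_Yp']

theorem azpow_conj_y (s : ℤ) :
    ∃ m : ℤ, ∀ (i : Fin d.r) (c : ℤ),
      d.a ^ s * d.y i ^ c * d.a ^ (-s) = d.y i ^ (m * c) := by
  obtain ⟨m, hm⟩ := azpow_conj_Yp d s
  refine ⟨m, fun i c => ?_⟩
  have h := hm (Pi.single i c)
  rw [Yp_single] at h
  rw [h]
  have : (fun j => m * (Pi.single i c : Fin d.r → ℤ) j) = (Pi.single i (m * c) : Fin d.r → ℤ) := by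
    funext j
    rcases eq_or_ne j i with hj | hj
    · subst hj; simp
    · simp [Pi.single_eq_of_ne hj]
  rw [this, Yp_single]

theorem azpow_conj_z (s : ℤ) :
    ∃ m : ℤ, ∀ (i : Fin d.r) (c : ℤ),
      d.a ^ s * d.z i ^ c * d.a ^ (-s) = d.z i ^ (m * c) := by
  obtain ⟨s₀, hs₀⟩ := azpow_reduce d s
  refine ⟨(d.k : ℤ) ^ s₀, fun i c => ?_⟩
  have h := apow_conj_Zp d s₀ (Pi.single i c)
  rw [Zp_single] at h
  rw [zpow_neg, hs₀, h]
  have h2 : (fun j => ((d.k : ℤ)) ^ s₀ * (Pi.single i c : Fin d.r → ℤ) j)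
      = (Pi.single i ((d.k : ℤ) ^ s₀ * c) : Fin d.r → ℤ) := by
    funext j
    rcases eq_or_ne j i with hj | hj
    · subst hj; simp
    · simp [Pi.single_eq_of_ne hj]
  rw [h2, Zp_single]

/-! ### Crossing lemmas -/

theorem ym_cross (i : Fin d.r) (m c : ℤ) :
    d.y i ^ m * d.z i ^ c = d.z i ^ c * d.y i ^ m * d.x ^ (m * c) := by
  rw [zc_ym d i c m]
  have hc1 : Commute (d.x ^ (-(m * c))) (d.x ^ (m * c)) := (Commute.refl d.x).zpow_zpow _ _
  rw [mul_assoc, mul_assoc, ← zpow_add]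
  simp

theorem cross_aux {E zz yy xx : G} (hE : Commute yy E) (hz : zz * yy = yy * zz * xx) :
    E * zz * yy = yy * (E * zz) * xx := by
  calc E * zz * yy = E * (zz * yy) := by rw [mul_assoc]
  _ = E * (yy * zz * xx) := by rw [hz]
  _ = E * yy * zz * xx := by group
  _ = yy * E * zz * xx := by rw [← hE.eq]
  _ = yy * (E * zz) * xx := by group

theorem Zp_cross (γ : Fin d.r → ℤ) (i : Fin d.r) (m : ℤ) :
    Zp d γ * d.y i ^ m = d.y i ^ m * Zp d γ * d.x ^ (-(m * γ i)) := by
  rw [Zp, ← Finset.noncommProd_erase_mul _ (Finset.mem_univ i) _ (zcomm d γ)]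
  refine cross_aux ?_ (zc_ym d i (γ i) m)
  refine Finset.noncommProd_commute _ _ _ _ (fun j hj => ?_)
  exact (cyz' d (Finset.ne_of_mem_erase hj).symm).zpow_zpow m (γ j)

theorem Yp_cross (β : Fin d.r → ℤ) (i : Fin d.r) (c : ℤ) :
    Yp d β * d.z i ^ c = d.z i ^ c * Yp d β * d.x ^ (β i * c) := by
  rw [Yp, ← Finset.noncommProd_erase_mul _ (Finset.mem_univ i) _ (ycomm d β)]
  refine cross_aux ?_ (ym_cross d i (β i) c)
  refine Finset.noncommProd_commute _ _ _ _ (fun j hj => ?_)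
  exact ((cyz' d (Finset.ne_of_mem_erase hj)).symm.zpow_zpow c (β j))

theorem Zp_conj_y (γ : Fin d.r → ℤ) (i : Fin d.r) (m : ℤ) :
    (Zp d γ)⁻¹ * d.y i ^ m * Zp d γ = d.y i ^ m * d.x ^ (m * γ i) := by
  have h : d.y i ^ m * Zp d γ = Zp d γ * d.y i ^ m * d.x ^ (m * γ i) := by
    rw [Zp_cross d γ i m]
    rw [mul_assoc, mul_assoc, ← zpow_add]
    simp
  rw [mul_assoc, h]
  group

theorem Yp_conj_z (β : Fin d.r → ℤ) (i : Fin d.r) (c : ℤ) :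
    (Yp d β)⁻¹ * d.z i ^ c * Yp d β = d.z i ^ c * d.x ^ (-(β i * c)) := by
  have h : d.z i ^ c * Yp d β = Yp d β * d.z i ^ c * d.x ^ (-(β i * c)) := by
    rw [Yp_cross d β i c]
    rw [mul_assoc, mul_assoc, ← zpow_add]
    simp
  rw [mul_assoc, h]
  group

/-! ### b-conjugation of powers -/

theorem b_x (c : ℤ) : d.b * d.x ^ c * d.b = d.x ^ (-c) := by
  have h := conj_zpow' d.b d.x c
  rw [binv] at h
  rw [← h, bxb, inv_zpow, ← zpow_neg]

theorem b_a (c : ℤ) : d.b * d.a ^ c * d.b = d.a ^ (-c) := by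
  have h := conj_zpow' d.b d.a c
  rw [binv] at h
  rw [← h, bab, inv_zpow, ← zpow_neg]

theorem b_y (i : Fin d.r) (c : ℤ) : d.b * d.y i ^ c * d.b = d.z i ^ (-c) := by
  have h := conj_zpow' d.b (d.y i) c
  rw [binv] at h
  rw [← h, byb, inv_zpow, ← zpow_neg]

theorem b_z (i : Fin d.r) (c : ℤ) : d.b * d.z i ^ c * d.b = d.y i ^ (-c) := by
  have h := conj_zpow' d.b (d.z i) c
  rw [binv] at h
  rw [← h, bzb, inv_zpow, ← zpow_neg]

theorem b_x' (c : ℤ) : d.b * d.x ^ c = d.x ^ (-c) * d.b := by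
  have h := b_x d c
  calc d.b * d.x ^ c = d.b * d.x ^ c * d.b * d.b := by
        rw [mul_assoc, ← pow_two, d.hb2, mul_one]
  _ = d.x ^ (-c) * d.b := by rw [h]

theorem b_a' (c : ℤ) : d.b * d.a ^ c = d.a ^ (-c) * d.b := by
  have h := b_a d c
  calc d.b * d.a ^ c = d.b * d.a ^ c * d.b * d.b := by
        rw [mul_assoc, ← pow_two, d.hb2, mul_one]
  _ = d.a ^ (-c) * d.b := by rw [h]

theorem b_y' (i : Fin d.r) (c : ℤ) : d.b * d.y i ^ c = d.z i ^ (-c) * d.b := by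
  have h := b_y d i c
  calc d.b * d.y i ^ c = d.b * d.y i ^ c * d.b * d.b := by
        rw [mul_assoc, ← pow_two, d.hb2, mul_one]
  _ = d.z i ^ (-c) * d.b := by rw [h]

theorem b_z' (i : Fin d.r) (c : ℤ) : d.b * d.z i ^ c = d.y i ^ (-c) * d.b := by
  have h := b_z d i c
  calc d.b * d.z i ^ c = d.b * d.z i ^ c * d.b * d.b := by
        rw [mul_assoc, ← pow_two, d.hb2, mul_one]
  _ = d.y i ^ (-c) * d.b := by rw [h]

/-! ### The normal form -/

noncomputable def Wz (α : ℤ) (β γ : Fin d.r → ℤ) (s : ℤ) (t : Bool) : G :=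
  d.x ^ α * (Yp d β * Zp d γ * d.a ^ s) * (cond t d.b 1)

theorem cx_core (c : ℤ) (β γ : Fin d.r → ℤ) (s : ℤ) :
    Commute (d.x ^ c) (Yp d β * Zp d γ * d.a ^ s) := by
  have h1 : Commute (d.x ^ c) (Yp d β) := (cx_Yp d β).zpow_left c
  have h2 : Commute (d.x ^ c) (Zp d γ) := (cx_Zp d γ).zpow_left c
  have h3 : Commute (d.x ^ c) (d.a ^ s) := (cxa d).zpow_zpow c s
  exact (h1.mul_right h2).mul_right h3

theorem Wz_mul_x (α : ℤ) (β γ : Fin d.r → ℤ) (s : ℤ) (t : Bool) (c : ℤ) :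
    Wz d α β γ s t * d.x ^ c = Wz d (α + cond t (-c) c) β γ s t := by
  cases t with
  | false =>
    simp only [Wz, cond_false, mul_one]
    calc d.x ^ α * (Yp d β * Zp d γ * d.a ^ s) * d.x ^ c
        = d.x ^ α * ((Yp d β * Zp d γ * d.a ^ s) * d.x ^ c) := by rw [mul_assoc]
    _ = d.x ^ α * (d.x ^ c * (Yp d β * Zp d γ * d.a ^ s)) := by rw [← (cx_core d c β γ s).eq]
    _ = d.x ^ (α + c) * (Yp d β * Zp d γ * d.a ^ s) := by rw [← mul_assoc, ← zpow_add]
  | true =>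
    simp only [Wz, cond_true]
    calc d.x ^ α * (Yp d β * Zp d γ * d.a ^ s) * d.b * d.x ^ c
        = d.x ^ α * (Yp d β * Zp d γ * d.a ^ s) * (d.b * d.x ^ c) := by rw [mul_assoc]
    _ = d.x ^ α * (Yp d β * Zp d γ * d.a ^ s) * (d.x ^ (-c) * d.b) := by rw [b_x']
    _ = d.x ^ α * ((Yp d β * Zp d γ * d.a ^ s) * d.x ^ (-c)) * d.b := by group
    _ = d.x ^ α * (d.x ^ (-c) * (Yp d β * Zp d γ * d.a ^ s)) * d.b := by
          rw [← (cx_core d (-c) β γ s).eq]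
    _ = d.x ^ (α + -c) * (Yp d β * Zp d γ * d.a ^ s) * d.b := by
          rw [← mul_assoc, ← zpow_add]

theorem Wz_mul_a (α : ℤ) (β γ : Fin d.r → ℤ) (s : ℤ) (t : Bool) (c : ℤ) :
    Wz d α β γ s t * d.a ^ c = Wz d α β γ (s + cond t (-c) c) t := by
  cases t with
  | false =>
    simp only [Wz, cond_false, mul_one]
    rw [mul_assoc, mul_assoc (Yp d β * Zp d γ), ← zpow_add, ← mul_assoc, ← mul_assoc]
  | true =>
    simp only [Wz, cond_true]
    calc d.x ^ α * (Yp d β * Zp d γ * d.a ^ s) * d.b * d.a ^ c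
        = d.x ^ α * (Yp d β * Zp d γ * d.a ^ s) * (d.a ^ (-c) * d.b) := by
          rw [mul_assoc _ d.b, b_a']
    _ = d.x ^ α * (Yp d β * Zp d γ * (d.a ^ s * d.a ^ (-c))) * d.b := by group
    _ = d.x ^ α * (Yp d β * Zp d γ * d.a ^ (s + -c)) * d.b := by rw [← zpow_add]

theorem Wz_mul_b (α : ℤ) (β γ : Fin d.r → ℤ) (s : ℤ) (t : Bool) :
    Wz d α β γ s t * d.b = Wz d α β γ s (!t) := by
  cases t with
  | false => simp only [Wz, cond_false, mul_one, Bool.not_false, cond_true]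
  | true =>
    simp only [Wz, cond_true, Bool.not_true, cond_false]
    rw [mul_assoc, ← pow_two, d.hb2, mul_one]

theorem Yp_mul_single (β : Fin d.r → ℤ) (i : Fin d.r) (m : ℤ) :
    Yp d β * d.y i ^ m = Yp d (β + Pi.single i m) := by
  rw [Yp_add, Yp_single]

theorem Zp_mul_single (γ : Fin d.r → ℤ) (i : Fin d.r) (m : ℤ) :
    Zp d γ * d.z i ^ m = Zp d (γ + Pi.single i m) := by
  rw [Zp_add, Zp_single]

theorem pull_x_mid {A Z W X : G} (h1 : Commute X A) (h2 : Commute X Z) :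
    A * (Z * (X * W)) = X * (A * Z * W) := by
  calc A * (Z * (X * W)) = A * ((Z * X) * W) := by group
  _ = A * ((X * Z) * W) := by rw [← h2.eq]
  _ = (A * X) * (Z * W) := by group
  _ = (X * A) * (Z * W) := by rw [← h1.eq]
  _ = X * (A * Z * W) := by group

theorem Wz_mul_y_f (α : ℤ) (β γ : Fin d.r → ℤ) (s : ℤ) (i : Fin d.r) (c : ℤ) :
    ∃ m : ℤ, Wz d α β γ s false * d.y i ^ c
      = Wz d (α + -(m * γ i)) (β + Pi.single i m) γ s false := by
  obtain ⟨m₀, hm₀⟩ := azpow_conj_y d s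
  refine ⟨m₀ * c, ?_⟩
  have key : d.a ^ s * d.y i ^ c = d.y i ^ (m₀ * c) * d.a ^ s := by
    have h := hm₀ i c
    calc d.a ^ s * d.y i ^ c
        = (d.a ^ s * d.y i ^ c * d.a ^ (-s)) * d.a ^ s := by
          rw [zpow_neg]; group
    _ = d.y i ^ (m₀ * c) * d.a ^ s := by rw [h]
  simp only [Wz, cond_false, mul_one]
  calc d.x ^ α * (Yp d β * Zp d γ * d.a ^ s) * d.y i ^ c
      = d.x ^ α * (Yp d β * Zp d γ * (d.a ^ s * d.y i ^ c)) := by group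
  _ = d.x ^ α * (Yp d β * Zp d γ * (d.y i ^ (m₀ * c) * d.a ^ s)) := by rw [key]
  _ = d.x ^ α * (Yp d β * (Zp d γ * d.y i ^ (m₀ * c)) * d.a ^ s) := by group
  _ = d.x ^ α * (Yp d β * (d.y i ^ (m₀ * c) * Zp d γ * d.x ^ (-(m₀ * c * γ i))) * d.a ^ s) := by
        rw [Zp_cross]
  _ = d.x ^ α * ((Yp d β * d.y i ^ (m₀ * c)) * (Zp d γ * (d.x ^ (-(m₀ * c * γ i)) * d.a ^ s))) := by
        group
  _ = d.x ^ α * (Yp d (β + Pi.single i (m₀ * c)) * (Zp d γ * (d.x ^ (-(m₀ * c * γ i)) * d.a ^ s))) := by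
        rw [Yp_mul_single]
  _ = d.x ^ α * (d.x ^ (-(m₀ * c * γ i)) * (Yp d (β + Pi.single i (m₀ * c)) * Zp d γ * d.a ^ s)) := by
        have h1 : Commute (d.x ^ (-(m₀ * c * γ i))) (Yp d (β + Pi.single i (m₀ * c))) :=
          (cx_Yp d _).zpow_left _
        have h2 : Commute (d.x ^ (-(m₀ * c * γ i))) (Zp d γ) := (cx_Zp d _).zpow_left _
        rw [pull_x_mid h1 h2]
  _ = d.x ^ (α + -(m₀ * c * γ i)) * (Yp d (β + Pi.single i (m₀ * c)) * Zp d γ * d.a ^ s) := by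
        rw [← mul_assoc, ← zpow_add]

theorem Wz_mul_z_f (α : ℤ) (β γ : Fin d.r → ℤ) (s : ℤ) (i : Fin d.r) (c : ℤ) :
    ∃ m : ℤ, Wz d α β γ s false * d.z i ^ c
      = Wz d α β (γ + Pi.single i m) s false := by
  obtain ⟨m₀, hm₀⟩ := azpow_conj_z d s
  refine ⟨m₀ * c, ?_⟩
  have key : d.a ^ s * d.z i ^ c = d.z i ^ (m₀ * c) * d.a ^ s := by
    have h := hm₀ i c
    calc d.a ^ s * d.z i ^ c
        = (d.a ^ s * d.z i ^ c * d.a ^ (-s)) * d.a ^ s := by rw [zpow_neg]; group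
    _ = d.z i ^ (m₀ * c) * d.a ^ s := by rw [h]
  simp only [Wz, cond_false, mul_one]
  calc d.x ^ α * (Yp d β * Zp d γ * d.a ^ s) * d.z i ^ c
      = d.x ^ α * (Yp d β * Zp d γ * (d.a ^ s * d.z i ^ c)) := by group
  _ = d.x ^ α * (Yp d β * Zp d γ * (d.z i ^ (m₀ * c) * d.a ^ s)) := by rw [key]
  _ = d.x ^ α * (Yp d β * (Zp d γ * d.z i ^ (m₀ * c)) * d.a ^ s) := by group
  _ = d.x ^ α * (Yp d β * Zp d (γ + Pi.single i (m₀ * c)) * d.a ^ s) := by rw [Zp_mul_single]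

theorem Wz_mul_y_t (α : ℤ) (β γ : Fin d.r → ℤ) (s : ℤ) (i : Fin d.r) (c : ℤ) :
    ∃ m : ℤ, Wz d α β γ s true * d.y i ^ c
      = Wz d α β (γ + Pi.single i m) s true := by
  have e1 : Wz d α β γ s true * d.y i ^ c = Wz d α β γ s false * d.z i ^ (-c) * d.b := by
    simp only [Wz, cond_true, cond_false, mul_one]
    rw [mul_assoc _ d.b, b_y']
    group
  obtain ⟨m, hm⟩ := Wz_mul_z_f d α β γ s i (-c)
  refine ⟨m, ?_⟩
  rw [e1, hm, Wz_mul_b]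
  rfl

theorem Wz_mul_z_t (α : ℤ) (β γ : Fin d.r → ℤ) (s : ℤ) (i : Fin d.r) (c : ℤ) :
    ∃ m : ℤ, Wz d α β γ s true * d.z i ^ c
      = Wz d (α + -(m * γ i)) (β + Pi.single i m) γ s true := by
  have e1 : Wz d α β γ s true * d.z i ^ c = Wz d α β γ s false * d.y i ^ (-c) * d.b := by
    simp only [Wz, cond_true, cond_false, mul_one]
    rw [mul_assoc _ d.b, b_z']
    group
  obtain ⟨m, hm⟩ := Wz_mul_y_f d α β γ s i (-c)
  refine ⟨m, ?_⟩
  rw [e1, hm, Wz_mul_b]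
  rfl

/-! ### Surjectivity of the normal form -/

theorem closure_form {S F : Set G} (h1 : (1 : G) ∈ F)
    (hstep : ∀ g ∈ S ∪ S⁻¹, ∀ h ∈ F, h * g ∈ F) {g : G}
    (hg : g ∈ Subgroup.closure S) : g ∈ F := by
  classical
  let T : Submonoid G :=
    { carrier := {u : G | ∀ h ∈ F, h * u ∈ F}
      one_mem' := by intro h hh; simpa using hh
      mul_mem' := by
        intro u v hu hv h hh
        rw [← mul_assoc]
        exact hv _ (hu _ hh) }
  have hg' : g ∈ (Subgroup.closure S).toSubmonoid := hg
  rw [Subgroup.closure_toSubmonoid] at hg'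
  have hT : Submonoid.closure (S ∪ S⁻¹) ≤ T := Submonoid.closure_le.mpr hstep
  have := hT hg' 1 h1
  simpa using this

theorem form_mul_gen (α : ℤ) (β γ : Fin d.r → ℤ) (s : ℤ) (t : Bool) (w : G)
    (hw : (∃ c : ℤ, w = d.x ^ c) ∨ (∃ i, ∃ c : ℤ, w = d.y i ^ c) ∨
      (∃ i, ∃ c : ℤ, w = d.z i ^ c) ∨ (∃ c : ℤ, w = d.a ^ c) ∨ w = d.b) :
    ∃ α' β' γ' s' t', Wz d α β γ s t * w = Wz d α' β' γ' s' t' := by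
  rcases hw with ⟨c, rfl⟩ | ⟨i, c, rfl⟩ | ⟨i, c, rfl⟩ | ⟨c, rfl⟩ | rfl
  · exact ⟨_, _, _, _, _, Wz_mul_x d α β γ s t c⟩
  · cases t with
    | false =>
      obtain ⟨m, hm⟩ := Wz_mul_y_f d α β γ s i c
      exact ⟨_, _, _, _, _, hm⟩
    | true =>
      obtain ⟨m, hm⟩ := Wz_mul_y_t d α β γ s i c
      exact ⟨_, _, _, _, _, hm⟩
  · cases t with
    | false =>
      obtain ⟨m, hm⟩ := Wz_mul_z_f d α β γ s i c
      exact ⟨_, _, _, _, _, hm⟩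
    | true =>
      obtain ⟨m, hm⟩ := Wz_mul_z_t d α β γ s i c
      exact ⟨_, _, _, _, _, hm⟩
  · exact ⟨_, _, _, _, _, Wz_mul_a d α β γ s t c⟩
  · exact ⟨_, _, _, _, _, Wz_mul_b d α β γ s t⟩

theorem exists_form (g : G) : ∃ α β γ s t, g = Wz d α β γ s t := by
  have h1 : (1 : G) ∈ {g : G | ∃ α β γ s t, g = Wz d α β γ s t} :=
    ⟨0, 0, 0, 0, false, by simp [Wz, Yp_zero, Zp_zero]⟩
  refine closure_form h1 ?_ (d.hgen ▸ Subgroup.mem_top g)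
  rintro w hw h ⟨α, β, γ, s, t, rfl⟩
  have key : (∃ c : ℤ, w = d.x ^ c) ∨ (∃ i, ∃ c : ℤ, w = d.y i ^ c) ∨
      (∃ i, ∃ c : ℤ, w = d.z i ^ c) ∨ (∃ c : ℤ, w = d.a ^ c) ∨ w = d.b := by
    rcases hw with hw | hw
    · rcases hw with (hw | ⟨i, rfl⟩) | ⟨i, rfl⟩
      · simp only [Set.mem_insert_iff, Set.mem_singleton_iff] at hw
        rcases hw with rfl | rfl | rfl
        · exact Or.inl ⟨1, (zpow_one _).symm⟩
        · exact Or.inr (Or.inr (Or.inr (Or.inl ⟨1, (zpow_one _).symm⟩)))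
        · exact Or.inr (Or.inr (Or.inr (Or.inr rfl)))
      · exact Or.inr (Or.inl ⟨i, 1, (zpow_one _).symm⟩)
      · exact Or.inr (Or.inr (Or.inl ⟨i, 1, (zpow_one _).symm⟩))
    · have hw' : w⁻¹ ∈ ({d.x, d.a, d.b} : Set G) ∪ Set.range d.y ∪ Set.range d.z :=
        Set.mem_inv.mp hw
      rcases hw' with (hw' | ⟨i, hi⟩) | ⟨i, hi⟩
      · simp only [Set.mem_insert_iff, Set.mem_singleton_iff] at hw'
        rcases hw' with hw' | hw' | hw'
        · exact Or.inl ⟨-1, by rw [← inv_inv w, hw']; simp⟩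
        · exact Or.inr (Or.inr (Or.inr (Or.inl ⟨-1, by rw [← inv_inv w, hw']; simp⟩)))
        · refine Or.inr (Or.inr (Or.inr (Or.inr ?_)))
          rw [← inv_inv w, hw', binv]
      · exact Or.inr (Or.inl ⟨i, -1, by rw [← inv_inv w, ← hi]; simp⟩)
      · exact Or.inr (Or.inr (Or.inl ⟨i, -1, by rw [← inv_inv w, ← hi]; simp⟩))
  obtain ⟨α', β', γ', s', t', hh⟩ := form_mul_gen d α β γ s t w key
  exact ⟨α', β', γ', s', t', hh⟩

/-! ### Counting -/

theorem Yp_congr {β β' : Fin d.r → ℤ} (h : ∀ i, β i ≡ β' i [ZMOD (d.p : ℕ)]) :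
    Yp d β = Yp d β' := by
  rw [Yp, Yp]
  exact Finset.noncommProd_congr rfl (fun i _ => zpow_congr (d.hyp i) (h i)) _

theorem Zp_congr {γ γ' : Fin d.r → ℤ} (h : ∀ i, γ i ≡ γ' i [ZMOD (d.p : ℕ)]) :
    Zp d γ = Zp d γ' := by
  rw [Zp, Zp]
  exact Finset.noncommProd_congr rfl (fun i _ => zpow_congr (d.hzp i) (h i)) _

theorem Wz_congr {α α' : ℤ} {β β' γ γ' : Fin d.r → ℤ} {s s' : ℤ} {t : Bool}
    (hα : α ≡ α' [ZMOD (d.p : ℕ)]) (hβ : ∀ i, β i ≡ β' i [ZMOD (d.p : ℕ)])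
    (hγ : ∀ i, γ i ≡ γ' i [ZMOD (d.p : ℕ)])
    (hs : s ≡ s' [ZMOD ((2 ^ (d.n - 1) : ℕ) : ℕ)]) :
    Wz d α β γ s t = Wz d α' β' γ' s' t := by
  rw [Wz, Wz, zpow_congr d.hxp hα, zpow_congr d.han hs, Yp_congr d hβ, Zp_congr d hγ]

theorem val_int_modeq {n : ℕ} [NeZero n] (a : ℤ) :
    (((a : ZMod n).val : ℤ)) ≡ a [ZMOD (n : ℕ)] := by
  rw [ZMod.val_intCast]
  exact Int.emod_emod_of_dvd a dvd_rfl

noncomputable def Psi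
    (v : ZMod d.p × (Fin d.r → ZMod d.p) × (Fin d.r → ZMod d.p) × ZMod (2 ^ (d.n - 1)) × Bool) :
    G :=
  Wz d ((v.1.val : ℤ)) (fun i => ((v.2.1 i).val : ℤ)) (fun i => ((v.2.2.1 i).val : ℤ))
    ((v.2.2.2.1.val : ℤ)) v.2.2.2.2

theorem Psi_spec (α : ℤ) (β γ : Fin d.r → ℤ) (s : ℤ) (t : Bool) :
    haveI : NeZero d.p := ⟨d.hp.pos.ne'⟩
    Psi d ((α : ZMod d.p), fun i => (β i : ZMod d.p), fun i => (γ i : ZMod d.p),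
      (s : ZMod (2 ^ (d.n - 1))), t) = Wz d α β γ s t := by
  haveI : NeZero d.p := ⟨d.hp.pos.ne'⟩
  haveI : NeZero (2 ^ (d.n - 1)) := ⟨pow_ne_zero _ two_ne_zero⟩
  exact Wz_congr d (val_int_modeq α) (fun i => val_int_modeq (β i))
    (fun i => val_int_modeq (γ i)) (val_int_modeq s)

theorem Psi_bij : Function.Bijective (Psi d) := by
  haveI : NeZero d.p := ⟨d.hp.pos.ne'⟩
  haveI : NeZero (2 ^ (d.n - 1)) := ⟨pow_ne_zero _ two_ne_zero⟩
  rw [Fintype.bijective_iff_surjective_and_card]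
  constructor
  · intro g
    obtain ⟨α, β, γ, s, t, rfl⟩ := exists_form d g
    exact ⟨_, Psi_spec d α β γ s t⟩
  · simp only [Fintype.card_prod, Fintype.card_fun, ZMod.card, Fintype.card_bool,
      Fintype.card_fin, d.hcard]
    have h0 : 0 < d.n := lt_of_lt_of_le (by norm_num) d.hn
    have hn1 : 2 ^ d.n = 2 ^ (d.n - 1) * 2 := by
      conv_lhs => rw [show d.n = (d.n - 1) + 1 from (Nat.succ_pred_eq_of_pos h0).symm]
      rw [pow_succ]
    rw [show 2 * d.r + 1 = 1 + (d.r + d.r) by ring, pow_add, pow_add, pow_one, hn1]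
    ring

theorem Wz_unique {α α' : ℤ} {β β' γ γ' : Fin d.r → ℤ} {s s' : ℤ} {t t' : Bool}
    (h : Wz d α β γ s t = Wz d α' β' γ' s' t') :
    (α : ZMod d.p) = (α' : ZMod d.p) ∧ (∀ i, ((β i : ZMod d.p)) = (β' i : ZMod d.p)) ∧
    (∀ i, ((γ i : ZMod d.p)) = (γ' i : ZMod d.p)) ∧
    ((s : ZMod (2 ^ (d.n - 1))) = (s' : ZMod (2 ^ (d.n - 1)))) ∧ t = t' := by
  haveI : NeZero d.p := ⟨d.hp.pos.ne'⟩
  haveI : NeZero (2 ^ (d.n - 1)) := ⟨pow_ne_zero _ two_ne_zero⟩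
  have e := (Psi_bij d).injective ((Psi_spec d α β γ s t).trans
    (h.trans (Psi_spec d α' β' γ' s' t').symm))
  refine ⟨congrArg Prod.fst e, ?_, ?_, ?_, ?_⟩
  · intro i
    exact congrFun (congrArg (fun v => v.2.1) e) i
  · intro i
    exact congrFun (congrArg (fun v => v.2.2.1) e) i
  · exact congrArg (fun v => v.2.2.2.1) e
  · exact congrArg (fun v => v.2.2.2.2) e

/-! ### Membership characterizations -/

theorem apow2j (j : ℕ) (σ : ℤ) :
    (d.a ^ (2 ^ j : ℕ)) ^ σ = d.a ^ (((2 ^ j : ℕ) : ℤ) * σ) := by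
  rw [← zpow_natCast, ← zpow_mul]

theorem Hform {g : G} :
    g ∈ Subgroup.closure (({d.x, d.a} : Set G) ∪ Set.range d.y) ↔
      ∃ α β s, g = Wz d α β 0 s false := by
  constructor
  · intro hg
    refine closure_form (S := ({d.x, d.a} : Set G) ∪ Set.range d.y)
      (F := {g : G | ∃ α β s, g = Wz d α β 0 s false})
      ⟨0, 0, 0, by simp [Wz, Yp_zero, Zp_zero]⟩ ?_ hg
    rintro w hw h ⟨α, β, st, rfl⟩
    have key : (∃ c : ℤ, w = d.x ^ c) ∨ (∃ i, ∃ c : ℤ, w = d.y i ^ c) ∨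
        (∃ c : ℤ, w = d.a ^ c) := by
      rcases hw with hw | hw
      · rcases hw with hw | ⟨i, rfl⟩
        · simp only [Set.mem_insert_iff, Set.mem_singleton_iff] at hw
          rcases hw with rfl | rfl
          · exact Or.inl ⟨1, (zpow_one _).symm⟩
          · exact Or.inr (Or.inr ⟨1, (zpow_one _).symm⟩)
        · exact Or.inr (Or.inl ⟨i, 1, (zpow_one _).symm⟩)
      · have hw' : w⁻¹ ∈ ({d.x, d.a} : Set G) ∪ Set.range d.y := Set.mem_inv.mp hw
        rcases hw' with hw' | ⟨i, hi⟩
        · simp only [Set.mem_insert_iff, Set.mem_singleton_iff] at hw'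
          rcases hw' with hw' | hw'
          · exact Or.inl ⟨-1, by rw [← inv_inv w, hw']; simp⟩
          · exact Or.inr (Or.inr ⟨-1, by rw [← inv_inv w, hw']; simp⟩)
        · exact Or.inr (Or.inl ⟨i, -1, by rw [← inv_inv w, ← hi]; simp⟩)
    rcases key with ⟨c, rfl⟩ | ⟨i, c, rfl⟩ | ⟨c, rfl⟩
    · exact ⟨_, _, _, Wz_mul_x d α β 0 st false c⟩
    · obtain ⟨m, hm⟩ := Wz_mul_y_f d α β 0 st i c
      exact ⟨_, _, _, hm⟩
    · exact ⟨_, _, _, Wz_mul_a d α β 0 st false c⟩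
  · rintro ⟨α, β, st, rfl⟩
    have hx : d.x ∈ Subgroup.closure (({d.x, d.a} : Set G) ∪ Set.range d.y) :=
      Subgroup.subset_closure (Or.inl (Or.inl rfl))
    have ha : d.a ∈ Subgroup.closure (({d.x, d.a} : Set G) ∪ Set.range d.y) :=
      Subgroup.subset_closure (Or.inl (Or.inr rfl))
    have hy : ∀ i, d.y i ∈ Subgroup.closure (({d.x, d.a} : Set G) ∪ Set.range d.y) :=
      fun i => Subgroup.subset_closure (Or.inr (Set.mem_range_self i))
    show d.x ^ α * (Yp d β * Zp d 0 * d.a ^ st) * (cond false d.b 1) ∈ _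
    rw [Zp_zero]
    exact mul_mem (mul_mem (zpow_mem hx α)
      (mul_mem (mul_mem (Yp_mem d hy β) (one_mem _)) (zpow_mem ha st))) (one_mem _)

theorem Yform {g : G} :
    g ∈ Subgroup.closure (Set.range d.y) ↔ ∃ β, g = Yp d β := by
  constructor
  · intro hg
    refine closure_form (S := Set.range d.y) (F := {g : G | ∃ β, g = Yp d β})
      ⟨0, (Yp_zero d).symm⟩ ?_ hg
    rintro w hw h ⟨β, rfl⟩
    have key : ∃ i, ∃ c : ℤ, w = d.y i ^ c := by
      rcases hw with ⟨i, rfl⟩ | hw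
      · exact ⟨i, 1, (zpow_one _).symm⟩
      · obtain ⟨i, hi⟩ := Set.mem_inv.mp hw
        exact ⟨i, -1, by rw [← inv_inv w, ← hi]; simp⟩
    obtain ⟨i, c, rfl⟩ := key
    exact ⟨β + Pi.single i c, Yp_mul_single d β i c⟩
  · rintro ⟨β, rfl⟩
    exact Yp_mem d (fun i => Subgroup.subset_closure (Set.mem_range_self i)) β

theorem Kform (j : ℕ) {g : G} :
    g ∈ Subgroup.closure (Set.range d.y ∪ ({d.a ^ 2 ^ j} : Set G)) ↔
      ∃ β, ∃ σ : ℤ, g = Yp d β * d.a ^ (((2 ^ j : ℕ) : ℤ) * σ) := by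
  constructor
  · intro hg
    refine closure_form (S := Set.range d.y ∪ ({d.a ^ 2 ^ j} : Set G))
      (F := {g : G | ∃ β, ∃ σ : ℤ, g = Yp d β * d.a ^ (((2 ^ j : ℕ) : ℤ) * σ)})
      ⟨0, 0, by simp [Yp_zero]⟩ ?_ hg
    rintro w hw h ⟨β, σ, rfl⟩
    have key : (∃ i, ∃ c : ℤ, w = d.y i ^ c) ∨ (∃ c : ℤ, w = d.a ^ (((2 ^ j : ℕ) : ℤ) * c)) := by
      rcases hw with hw | hw
      · rcases hw with ⟨i, rfl⟩ | hw
        · exact Or.inl ⟨i, 1, (zpow_one _).symm⟩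
        · rw [Set.mem_singleton_iff] at hw
          subst hw
          exact Or.inr ⟨1, by rw [← apow2j, zpow_one]⟩
      · have hw' := Set.mem_inv.mp hw
        rcases hw' with ⟨i, hi⟩ | hw'
        · exact Or.inl ⟨i, -1, by rw [← inv_inv w, ← hi]; simp⟩
        · rw [Set.mem_singleton_iff] at hw'
          refine Or.inr ⟨-1, ?_⟩
          rw [← inv_inv w, hw', ← apow2j, zpow_neg, zpow_one]
    rcases key with ⟨i, c, rfl⟩ | ⟨c, rfl⟩
    · obtain ⟨m, hm⟩ := azpow_conj_y d (((2 ^ j : ℕ) : ℤ) * σ)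
      refine ⟨β + Pi.single i (m * c), σ, ?_⟩
      have key2 : d.a ^ (((2 ^ j : ℕ) : ℤ) * σ) * d.y i ^ c
          = d.y i ^ (m * c) * d.a ^ (((2 ^ j : ℕ) : ℤ) * σ) := by
        have hh := hm i c
        calc d.a ^ (((2 ^ j : ℕ) : ℤ) * σ) * d.y i ^ c
            = (d.a ^ (((2 ^ j : ℕ) : ℤ) * σ) * d.y i ^ c *
                d.a ^ (-(((2 ^ j : ℕ) : ℤ) * σ))) * d.a ^ (((2 ^ j : ℕ) : ℤ) * σ) := by
              rw [zpow_neg]; group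
        _ = d.y i ^ (m * c) * d.a ^ (((2 ^ j : ℕ) : ℤ) * σ) := by rw [hh]
      calc Yp d β * d.a ^ (((2 ^ j : ℕ) : ℤ) * σ) * d.y i ^ c
          = Yp d β * (d.a ^ (((2 ^ j : ℕ) : ℤ) * σ) * d.y i ^ c) := by rw [mul_assoc]
      _ = Yp d β * (d.y i ^ (m * c) * d.a ^ (((2 ^ j : ℕ) : ℤ) * σ)) := by rw [key2]
      _ = (Yp d β * d.y i ^ (m * c)) * d.a ^ (((2 ^ j : ℕ) : ℤ) * σ) := by rw [mul_assoc]
      _ = Yp d (β + Pi.single i (m * c)) * d.a ^ (((2 ^ j : ℕ) : ℤ) * σ) := by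
            rw [Yp_mul_single]
    · refine ⟨β, σ + c, ?_⟩
      rw [mul_assoc, ← zpow_add, ← mul_add]
  · rintro ⟨β, σ, rfl⟩
    have hy : ∀ i, d.y i ∈ Subgroup.closure (Set.range d.y ∪ ({d.a ^ 2 ^ j} : Set G)) :=
      fun i => Subgroup.subset_closure (Or.inl (Set.mem_range_self i))
    have ha : (d.a ^ (2 ^ j : ℕ)) ∈ Subgroup.closure (Set.range d.y ∪ ({d.a ^ 2 ^ j} : Set G)) :=
      Subgroup.subset_closure (Or.inr rfl)
    refine mul_mem (Yp_mem d hy β) ?_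
    rw [← apow2j]
    exact zpow_mem ha σ

/-! ### Numeric helpers -/

theorem p_ne_two : d.p ≠ 2 := by
  intro h
  have := d.hp4
  rw [h] at this
  norm_num at this

theorem int_cast_zmodp_eq_zero {c : ℤ} (h : ((c : ZMod d.p)) = 0) : (d.p : ℤ) ∣ c :=
  (ZMod.intCast_zmod_eq_zero_iff_dvd c d.p).mp h

theorem one_ne_zero_zmodp : ((1 : ℤ) : ZMod d.p) ≠ 0 := by
  intro h
  have := int_cast_zmodp_eq_zero d h
  have h2 : (d.p : ℤ) ≤ 1 := Int.le_of_dvd one_pos this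
  have := d.hp.one_lt
  omega

theorem two_ne_zero_zmodp : ((2 : ℤ) : ZMod d.p) ≠ 0 := by
  intro h
  have h1 := int_cast_zmodp_eq_zero d h
  have h2 : (d.p : ℤ) ∣ 2 := h1
  have h3 : d.p ∣ 2 := by exact_mod_cast h2
  have := (Nat.prime_dvd_prime_iff_eq d.hp Nat.prime_two).mp h3
  exact p_ne_two d this

/-! ### Part (a) -/

theorem WH_eq (α : ℤ) (β : Fin d.r → ℤ) (s : ℤ) :
    Wz d α β 0 s false = d.x ^ α * Yp d β * d.a ^ s := by
  rw [Wz, Zp_zero]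
  simp only [mul_one, cond_false, mul_assoc]

theorem k_ne_one_zmod : (d.k : ZMod d.p) ≠ 1 := by
  intro h
  have h1 := d.hordk
  rw [h, orderOf_one] at h1
  have h3 : (2:ℕ) ^ 1 ≤ 2 ^ (d.n - 1) :=
    Nat.pow_le_pow_right (by norm_num) (by have := d.hn; omega)
  simp only [pow_one] at h3
  omega

theorem one_sub_k_unit : ∃ u : ℤ, (1 - (d.k : ℤ)) * u ≡ 1 [ZMOD (d.p : ℕ)] := by
  haveI : Fact d.p.Prime := ⟨d.hp⟩
  set w : ZMod d.p := 1 - (d.k : ZMod d.p) with hw_def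
  have hw : w ≠ 0 := sub_ne_zero.mpr (Ne.symm (k_ne_one_zmod d))
  refine ⟨((w⁻¹).val : ℤ), ?_⟩
  rw [← ZMod.intCast_eq_intCast_iff]
  push_cast
  have hval : (((w⁻¹).val : ℕ) : ZMod d.p) = w⁻¹ := by
    rw [ZMod.natCast_val, ZMod.cast_id]
  rw [hval, ← hw_def]
  exact mul_inv_cancel₀ hw

theorem y_pow_recover {i : Fin d.r} {K : Subgroup G}
    (hk : d.y i ^ (1 - (d.k : ℤ)) ∈ K) : d.y i ∈ K := by
  obtain ⟨u, hu⟩ := one_sub_k_unit d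
  have h2 : (d.y i ^ (1 - (d.k : ℤ))) ^ u ∈ K := zpow_mem hk u
  rw [← zpow_mul] at h2
  have h3 : d.y i ^ ((1 - (d.k : ℤ)) * u) = d.y i ^ (1 : ℤ) := zpow_congr (d.hyp i) hu
  rwa [h3, zpow_one] at h2

open scoped commutatorElement in
theorem comm_ay (i : Fin d.r) : ⁅d.a⁻¹, (d.y i)⁻¹⁆ = d.y i ^ (1 - (d.k : ℤ)) := by
  rw [commutatorElement_def, inv_inv, inv_inv]
  exact d.hay i

theorem Hmul (α1 : ℤ) (β1 : Fin d.r → ℤ) (s1 : ℤ) (α2 : ℤ) (β2 : Fin d.r → ℤ) (s2 : ℤ) :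
    ∃ B, Wz d α1 β1 0 s1 false * Wz d α2 β2 0 s2 false
      = Wz d (α1 + α2) B 0 (s1 + s2) false := by
  obtain ⟨m, hm⟩ := azpow_conj_Yp d s1
  refine ⟨β1 + fun i => m * β2 i, ?_⟩
  have key : d.a ^ s1 * Yp d β2 = Yp d (fun i => m * β2 i) * d.a ^ s1 := by
    have h := hm β2
    calc d.a ^ s1 * Yp d β2
        = (d.a ^ s1 * Yp d β2 * d.a ^ (-s1)) * d.a ^ s1 := by rw [zpow_neg]; group
    _ = Yp d (fun i => m * β2 i) * d.a ^ s1 := by rw [h]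
  rw [WH_eq, WH_eq, WH_eq]
  calc d.x ^ α1 * Yp d β1 * d.a ^ s1 * (d.x ^ α2 * Yp d β2 * d.a ^ s2)
      = d.x ^ α1 * Yp d β1 * (d.a ^ s1 * d.x ^ α2) * Yp d β2 * d.a ^ s2 := by group
  _ = d.x ^ α1 * Yp d β1 * (d.x ^ α2 * d.a ^ s1) * Yp d β2 * d.a ^ s2 := by
        rw [((cxa d).symm.zpow_zpow s1 α2).eq]
  _ = d.x ^ α1 * (Yp d β1 * d.x ^ α2) * (d.a ^ s1 * Yp d β2) * d.a ^ s2 := by group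
  _ = d.x ^ α1 * (d.x ^ α2 * Yp d β1) * (d.a ^ s1 * Yp d β2) * d.a ^ s2 := by
        rw [← ((cx_Yp d β1).zpow_left α2).eq]
  _ = d.x ^ α1 * (d.x ^ α2 * Yp d β1) * (Yp d (fun i => m * β2 i) * d.a ^ s1) * d.a ^ s2 := by
        rw [key]
  _ = d.x ^ (α1 + α2) * (Yp d β1 * Yp d (fun i => m * β2 i)) * d.a ^ (s1 + s2) := by
        rw [zpow_add, zpow_add]
        group
  _ = d.x ^ (α1 + α2) * Yp d (β1 + fun i => m * β2 i) * d.a ^ (s1 + s2) := by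
        rw [← Yp_add]

theorem Wz_div (C S : ℤ) (B B' : Fin d.r → ℤ) :
    Wz d C B 0 S false * (Wz d C B' 0 S false)⁻¹ = Yp d B * (Yp d B')⁻¹ := by
  rw [WH_eq, WH_eq]
  have hc : Commute (d.x ^ C) (Yp d B * (Yp d B')⁻¹) :=
    ((cx_Yp d B).zpow_left C).mul_right ((cx_Yp d B').zpow_left C).inv_right
  calc d.x ^ C * Yp d B * d.a ^ S * (d.x ^ C * Yp d B' * d.a ^ S)⁻¹
      = d.x ^ C * (Yp d B * (Yp d B')⁻¹) * (d.x ^ C)⁻¹ := by group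
  _ = (Yp d B * (Yp d B')⁻¹) * d.x ^ C * (d.x ^ C)⁻¹ := by rw [hc.eq]
  _ = Yp d B * (Yp d B')⁻¹ := by group

open scoped commutatorElement in
theorem partA :
    ⁅Subgroup.closure (({d.x, d.a} : Set G) ∪ Set.range d.y),
      Subgroup.closure (({d.x, d.a} : Set G) ∪ Set.range d.y)⁆
    = Subgroup.closure (Set.range d.y) := by
  apply le_antisymm
  · rw [Subgroup.commutator_le]
    intro g hg h hh
    obtain ⟨α1, β1, s1, rfl⟩ := (Hform d).mp hg
    obtain ⟨α2, β2, s2, rfl⟩ := (Hform d).mp hh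
    obtain ⟨B, hB⟩ := Hmul d α1 β1 s1 α2 β2 s2
    obtain ⟨B', hB'⟩ := Hmul d α2 β2 s2 α1 β1 s1
    have e1 : ⁅Wz d α1 β1 0 s1 false, Wz d α2 β2 0 s2 false⁆
        = (Wz d α1 β1 0 s1 false * Wz d α2 β2 0 s2 false)
          * (Wz d α2 β2 0 s2 false * Wz d α1 β1 0 s1 false)⁻¹ := by
      rw [commutatorElement_def]
      group
    rw [e1, hB, hB', show α2 + α1 = α1 + α2 by ring, show s2 + s1 = s1 + s2 by ring, Wz_div]
    have hy : ∀ i, d.y i ∈ Subgroup.closure (Set.range d.y) :=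
      fun i => Subgroup.subset_closure (Set.mem_range_self i)
    exact mul_mem (Yp_mem d hy B) (inv_mem (Yp_mem d hy B'))
  · rw [Subgroup.closure_le]
    rintro w ⟨i, rfl⟩
    have ha : d.a⁻¹ ∈ Subgroup.closure (({d.x, d.a} : Set G) ∪ Set.range d.y) :=
      inv_mem (Subgroup.subset_closure (Or.inl (Or.inr rfl)))
    have hyi : (d.y i)⁻¹ ∈ Subgroup.closure (({d.x, d.a} : Set G) ∪ Set.range d.y) :=
      inv_mem (Subgroup.subset_closure (Or.inr (Set.mem_range_self i)))
    have hcm := Subgroup.commutator_mem_commutator ha hyi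
    rw [comm_ay] at hcm
    exact y_pow_recover d hcm

/-! ### Helpers for part (b) -/

theorem inv_exists {w : ℤ} (h0 : ((w : ZMod d.p)) ≠ 0) :
    ∃ u : ℤ, w * u ≡ 1 [ZMOD (d.p : ℕ)] := by
  haveI : Fact d.p.Prime := ⟨d.hp⟩
  refine ⟨(((w : ZMod d.p)⁻¹).val : ℤ), ?_⟩
  rw [← ZMod.intCast_eq_intCast_iff]
  push_cast
  have hval : ((((w : ZMod d.p)⁻¹).val : ℕ) : ZMod d.p) = (w : ZMod d.p)⁻¹ := by
    rw [ZMod.natCast_val, ZMod.cast_id]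
  rw [hval]
  exact mul_inv_cancel₀ h0

theorem x_recover {K : Subgroup G} (hx : d.x ∉ K) {c : ℤ} (hc : d.x ^ c ∈ K) :
    ((c : ZMod d.p)) = 0 := by
  by_contra h0
  obtain ⟨u, hu⟩ := inv_exists d h0
  have h2 : (d.x ^ c) ^ u ∈ K := zpow_mem hc u
  rw [← zpow_mul, zpow_congr d.hxp hu, zpow_one] at h2
  exact hx h2

theorem Yp_neg (β : Fin d.r → ℤ) : (Yp d β)⁻¹ = Yp d (-β) := by
  refine inv_eq_of_mul_eq_one_right ?_
  rw [← Yp_add, add_neg_cancel, Yp_zero]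

theorem cYp_y (β : Fin d.r → ℤ) (i : Fin d.r) : Commute (Yp d β) (d.y i) :=
  (commute_Yp d (fun j => cyy d i j) β).symm

theorem cYpYp (β B : Fin d.r → ℤ) : Commute (Yp d β) (Yp d B) :=
  commute_Yp d (cYp_y d β) B

/-! ### (b) reverse direction: each K_j is a Shoda pair -/

theorem conj_K (α : ℤ) (β : Fin d.r → ℤ) (s : ℤ) (B : Fin d.r → ℤ) (E : ℤ) :
    ∃ C, (Wz d α β 0 s false)⁻¹ * (Yp d B * d.a ^ E) * Wz d α β 0 s false
      = Yp d C * d.a ^ E := by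
  obtain ⟨m1, hm1⟩ := azpow_conj_Yp d E
  obtain ⟨m2, hm2⟩ := azpow_conj_Yp' d s
  set C₁ : Fin d.r → ℤ := (-β) + B + fun i => m1 * β i with hC₁
  refine ⟨fun i => m2 * C₁ i, ?_⟩
  have key1 : d.a ^ E * Yp d β = Yp d (fun i => m1 * β i) * d.a ^ E := by
    have h := hm1 β
    calc d.a ^ E * Yp d β
        = (d.a ^ E * Yp d β * d.a ^ (-E)) * d.a ^ E := by rw [zpow_neg]; group
    _ = Yp d (fun i => m1 * β i) * d.a ^ E := by rw [h]
  have key2 : (d.a ^ s)⁻¹ * Yp d C₁ * d.a ^ s = Yp d (fun i => m2 * C₁ i) := by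
    rw [← zpow_neg]
    exact hm2 C₁
  have hx : Commute (d.x ^ α) (Yp d B * d.a ^ E) :=
    ((cx_Yp d B).zpow_left α).mul_right ((cxa d).zpow_zpow α E)
  have hxconj : (d.x ^ α)⁻¹ * (Yp d B * d.a ^ E) * d.x ^ α = Yp d B * d.a ^ E := by
    rw [mul_assoc, ← hx.eq]
    group
  rw [WH_eq]
  calc (d.x ^ α * Yp d β * d.a ^ s)⁻¹ * (Yp d B * d.a ^ E) * (d.x ^ α * Yp d β * d.a ^ s)
      = (d.a ^ s)⁻¹ * (Yp d β)⁻¹ * ((d.x ^ α)⁻¹ * (Yp d B * d.a ^ E) * d.x ^ α)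
        * Yp d β * d.a ^ s := by group
  _ = (d.a ^ s)⁻¹ * (Yp d β)⁻¹ * (Yp d B * d.a ^ E) * Yp d β * d.a ^ s := by rw [hxconj]
  _ = (d.a ^ s)⁻¹ * ((Yp d β)⁻¹ * Yp d B) * (d.a ^ E * Yp d β) * d.a ^ s := by group
  _ = (d.a ^ s)⁻¹ * ((Yp d β)⁻¹ * Yp d B) * (Yp d (fun i => m1 * β i) * d.a ^ E)
      * d.a ^ s := by rw [key1]
  _ = (d.a ^ s)⁻¹ * ((Yp d (-β) * Yp d B) * Yp d (fun i => m1 * β i)) * d.a ^ s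
      * d.a ^ E := by rw [Yp_neg]; group
  _ = (d.a ^ s)⁻¹ * Yp d C₁ * d.a ^ s * d.a ^ E := by
        rw [← Yp_add, ← Yp_add, hC₁]
  _ = Yp d (fun i => m2 * C₁ i) * d.a ^ E := by rw [key2]

theorem p_odd : d.p % 2 = 1 := by
  have h1 : d.p % 4 % 2 = d.p % 2 := Nat.mod_mod_of_dvd d.p (by norm_num)
  rw [d.hp4] at h1
  omega

theorem coprime_p_pow2 (j : ℕ) : IsCoprime (d.p : ℤ) ((2 ^ j : ℕ) : ℤ) := by
  rw [Nat.isCoprime_iff_coprime]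
  refine Nat.Coprime.pow_right j ?_
  rw [Nat.coprime_primes d.hp Nat.prime_two]
  exact p_ne_two d

theorem pow2_ne_zero_zmodp (j : ℕ) : (((2 ^ j : ℕ) : ℤ) : ZMod d.p) ≠ 0 := by
  intro h
  have h1 := int_cast_zmodp_eq_zero d h
  have h2 : d.p ∣ 2 ^ j := by exact_mod_cast h1
  have h3 : d.p ∣ 2 := Nat.Prime.dvd_of_dvd_pow d.hp h2
  have := (Nat.prime_dvd_prime_iff_eq d.hp Nat.prime_two).mp h3
  exact p_ne_two d this

theorem cx_core' (β γ : Fin d.r → ℤ) (s : ℤ) :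
    Commute d.x (Yp d β * Zp d γ * d.a ^ s) := by
  have := cx_core d 1 β γ s
  rwa [zpow_one] at this

theorem comm_gx (α : ℤ) (β γ : Fin d.r → ℤ) (s : ℤ) :
    (Wz d α β γ s true)⁻¹ * d.x⁻¹ * Wz d α β γ s true * d.x = d.x ^ (2 : ℤ) := by
  have hw : Commute d.x (d.x ^ α * (Yp d β * Zp d γ * d.a ^ s)) :=
    ((Commute.refl d.x).zpow_right α).mul_right (cx_core' d β γ s)
  have hWz : Wz d α β γ s true = (d.x ^ α * (Yp d β * Zp d γ * d.a ^ s)) * d.b := by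
    rw [Wz]; rfl
  set w := d.x ^ α * (Yp d β * Zp d γ * d.a ^ s) with hwdef
  have h1 : w⁻¹ * d.x⁻¹ * w = d.x⁻¹ := by
    have := hw.inv_left.eq
    calc w⁻¹ * d.x⁻¹ * w = w⁻¹ * (d.x⁻¹ * w) := by rw [mul_assoc]
    _ = w⁻¹ * (w * d.x⁻¹) := by rw [this]
    _ = d.x⁻¹ := by group
  have h2 : d.b * d.x⁻¹ * d.b = d.x := by
    have := b_x d (-1)
    rwa [zpow_neg_one, neg_neg, zpow_one] at this
  calc (Wz d α β γ s true)⁻¹ * d.x⁻¹ * Wz d α β γ s true * d.x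
      = d.b⁻¹ * (w⁻¹ * d.x⁻¹ * w) * d.b * d.x := by rw [hWz]; group
  _ = d.b⁻¹ * d.x⁻¹ * d.b * d.x := by rw [h1]
  _ = d.b * d.x⁻¹ * d.b * d.x := by rw [binv]
  _ = d.x * d.x := by rw [h2]
  _ = d.x ^ (2 : ℤ) := by
        rw [show (2 : ℤ) = 1 + 1 by ring, zpow_add, zpow_one]

theorem comm_gy (α : ℤ) (β γ : Fin d.r → ℤ) (s : ℤ) (i : Fin d.r) :
    ∃ m : ℤ, (Wz d α β γ s false)⁻¹ * (d.y i)⁻¹ * Wz d α β γ s false * d.y i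
      = d.y i ^ (1 - m) * d.x ^ ((-1) * γ i) := by
  obtain ⟨m, hm⟩ := azpow_conj_y d (-s)
  rw [neg_neg] at hm
  refine ⟨m, ?_⟩
  have hWz : Wz d α β γ s false = d.x ^ α * (Yp d β * Zp d γ * d.a ^ s) := by
    rw [Wz]; simp only [cond_false, mul_one]
  rw [hWz]
  have h1 : (d.x ^ α)⁻¹ * d.y i ^ (-1 : ℤ) * d.x ^ α = d.y i ^ (-1 : ℤ) := by
    have hc : Commute (d.x ^ α) (d.y i ^ (-1 : ℤ)) := (cxy d i).zpow_zpow α (-1)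
    calc (d.x ^ α)⁻¹ * d.y i ^ (-1 : ℤ) * d.x ^ α
        = (d.x ^ α)⁻¹ * (d.y i ^ (-1 : ℤ) * d.x ^ α) := by rw [mul_assoc]
    _ = (d.x ^ α)⁻¹ * (d.x ^ α * d.y i ^ (-1 : ℤ)) := by rw [← hc.eq]
    _ = d.y i ^ (-1 : ℤ) := by group
  have h2 : (Yp d β)⁻¹ * d.y i ^ (-1 : ℤ) * Yp d β = d.y i ^ (-1 : ℤ) := by
    have hc : Commute (Yp d β) (d.y i ^ (-1 : ℤ)) := (cYp_y d β i).zpow_right (-1)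
    calc (Yp d β)⁻¹ * d.y i ^ (-1 : ℤ) * Yp d β
        = (Yp d β)⁻¹ * (d.y i ^ (-1 : ℤ) * Yp d β) := by rw [mul_assoc]
    _ = (Yp d β)⁻¹ * (Yp d β * d.y i ^ (-1 : ℤ)) := by rw [hc.eq]
    _ = d.y i ^ (-1 : ℤ) := by group
  have h3 := Zp_conj_y d γ i (-1)
  have h4 : d.a ^ (-s) * (d.y i ^ (-1 : ℤ) * d.x ^ ((-1) * γ i)) * d.a ^ s
      = d.y i ^ (m * (-1)) * d.x ^ ((-1) * γ i) := by
    have hc : Commute (d.a ^ (-s)) (d.x ^ ((-1) * γ i)) :=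
      ((cxa d).symm.zpow_zpow (-s) _)
    have h5 := hm i (-1)
    calc d.a ^ (-s) * (d.y i ^ (-1 : ℤ) * d.x ^ ((-1) * γ i)) * d.a ^ s
        = (d.a ^ (-s) * d.y i ^ (-1 : ℤ) * d.a ^ s) * (d.a ^ (-s) * d.x ^ ((-1) * γ i)
          * d.a ^ s) := by group
    _ = d.y i ^ (m * (-1)) * (d.a ^ (-s) * d.x ^ ((-1) * γ i) * d.a ^ s) := by rw [h5]
    _ = d.y i ^ (m * (-1)) * (d.x ^ ((-1) * γ i) * d.a ^ (-s) * d.a ^ s) := by rw [hc.eq]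
    _ = d.y i ^ (m * (-1)) * d.x ^ ((-1) * γ i) := by group
  have expand : (d.x ^ α * (Yp d β * Zp d γ * d.a ^ s))⁻¹ * (d.y i)⁻¹
      * (d.x ^ α * (Yp d β * Zp d γ * d.a ^ s))
      = d.a ^ (-s) * ((Zp d γ)⁻¹ * ((Yp d β)⁻¹ * ((d.x ^ α)⁻¹ * d.y i ^ (-1 : ℤ)
        * d.x ^ α) * Yp d β) * Zp d γ) * d.a ^ s := by
    rw [zpow_neg, zpow_neg_one]
    group
  rw [expand, h1, h2, h3, h4]
  have hc2 : Commute (d.x ^ ((-1) * γ i)) (d.y i) := ((cxy d i).zpow_left _)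
  calc d.y i ^ (m * (-1)) * d.x ^ ((-1) * γ i) * d.y i
      = d.y i ^ (m * (-1)) * (d.x ^ ((-1) * γ i) * d.y i) := by rw [mul_assoc]
  _ = d.y i ^ (m * (-1)) * (d.y i * d.x ^ ((-1) * γ i)) := by rw [hc2.eq]
  _ = (d.y i ^ (m * (-1)) * d.y i ^ (1 : ℤ)) * d.x ^ ((-1) * γ i) := by
        rw [zpow_one]; group
  _ = d.y i ^ (1 - m) * d.x ^ ((-1) * γ i) := by
        rw [← zpow_add]
        congr 1
        ring

theorem x2_eq_Wz : d.x ^ (2 : ℤ) = Wz d 2 0 0 0 false := by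
  rw [WH_eq, Yp_zero]
  simp

theorem yx_eq_Wz (i : Fin d.r) (c e : ℤ) :
    d.y i ^ c * d.x ^ e = Wz d e (Pi.single i c) 0 0 false := by
  rw [WH_eq, Yp_single]
  have hc : Commute (d.y i ^ c) (d.x ^ e) := ((cxy d i).symm.zpow_zpow c e)
  rw [hc.eq]
  simp

theorem K_elt_eq_Wz (B : Fin d.r → ℤ) (E : ℤ) :
    Yp d B * d.a ^ E = Wz d 0 B 0 E false := by
  rw [WH_eq]
  simp

theorem not_in_K {e : ℤ} (he : ((e : ZMod d.p)) ≠ 0) (B : Fin d.r → ℤ) (j : ℕ)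
    (hBK : Wz d e B 0 0 false ∈ Subgroup.closure (Set.range d.y ∪ ({d.a ^ 2 ^ j} : Set G))) :
    False := by
  obtain ⟨B', σ, hB'⟩ := (Kform d j).mp hBK
  rw [K_elt_eq_Wz] at hB'
  obtain ⟨h1, _⟩ := Wz_unique d hB'
  rw [show ((0 : ℤ) : ZMod d.p) = 0 by simp] at h1
  exact he h1

theorem intcast_zero_modeq {c : ℤ} (h : ((c : ZMod d.p)) = 0) : c ≡ 0 [ZMOD (d.p : ℕ)] := by
  rw [← ZMod.intCast_eq_intCast_iff] at *
  rwa [Int.cast_zero]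

theorem shoda_Kj (j : ℕ) :
    IsShodaPair (Subgroup.closure (({d.x, d.a} : Set G) ∪ Set.range d.y))
      (Subgroup.closure (Set.range d.y ∪ ({d.a ^ 2 ^ j} : Set G))) := by
  have hxH : d.x ∈ Subgroup.closure (({d.x, d.a} : Set G) ∪ Set.range d.y) :=
    Subgroup.subset_closure (Or.inl (Or.inl rfl))
  have haH : d.a ∈ Subgroup.closure (({d.x, d.a} : Set G) ∪ Set.range d.y) :=
    Subgroup.subset_closure (Or.inl (Or.inr rfl))
  have hyH : ∀ i, d.y i ∈ Subgroup.closure (({d.x, d.a} : Set G) ∪ Set.range d.y) :=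
    fun i => Subgroup.subset_closure (Or.inr (Set.mem_range_self i))
  refine ⟨?_, ?_, ?_, ?_⟩
  · -- K ≤ H
    rw [Subgroup.closure_le]
    rintro w hw
    rcases hw with ⟨i, rfl⟩ | hw
    · exact hyH i
    · rw [Set.mem_singleton_iff] at hw
      subst hw
      exact pow_mem haH _
  · -- NormalIn
    intro h hh g hg
    obtain ⟨α, β, s, rfl⟩ := (Hform d).mp hh
    obtain ⟨B, σ, rfl⟩ := (Kform d j).mp hg
    obtain ⟨C, hC⟩ := conj_K d α β s B (((2 ^ j : ℕ) : ℤ) * σ)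
    rw [hC]
    exact (Kform d j).mpr ⟨C, σ, rfl⟩
  · -- CyclicQuot
    refine ⟨d.x * d.a, mul_mem hxH haH, fun g hg => ?_⟩
    obtain ⟨α, β, s, rfl⟩ := (Hform d).mp hg
    obtain ⟨u, v, huv⟩ := coprime_p_pow2 d j
    set m : ℤ := α * (v * ((2 ^ j : ℕ) : ℤ)) + s * (u * d.p) with hm_def
    have hpm : (d.p : ℤ) ∣ (α - m) := by
      refine ⟨α * u - s * u, ?_⟩
      rw [hm_def]
      linear_combination (-α) * huv
    have h2m : ((2 ^ j : ℕ) : ℤ) ∣ (s - m) := by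
      refine ⟨s * v - α * v, ?_⟩
      rw [hm_def]
      linear_combination (-s) * huv
    refine ⟨m, ?_⟩
    have hxa : (d.x * d.a) ^ m = d.x ^ m * d.a ^ m := (cxa d).mul_zpow m
    obtain ⟨m2, hm2⟩ := azpow_conj_Yp' d m
    have hx0 : d.x ^ (α - m) = 1 := by
      have hmod : (α - m) ≡ 0 [ZMOD (d.p : ℕ)] := Int.modEq_zero_iff_dvd.mpr hpm
      rw [zpow_congr d.hxp hmod, zpow_zero]
    obtain ⟨w, hw⟩ := h2m
    have key : ((d.x * d.a) ^ m)⁻¹ * Wz d α β 0 s false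
        = Yp d (fun i => m2 * β i) * d.a ^ (((2 ^ j : ℕ) : ℤ) * w) := by
      rw [WH_eq, hxa]
      have e1 : (d.x ^ m)⁻¹ * d.x ^ α = d.x ^ (α - m) := by
        rw [← zpow_neg, ← zpow_add]
        congr 1
        ring
      have e2 : d.a ^ (-m) * Yp d β = Yp d (fun i => m2 * β i) * d.a ^ (-m) := by
        have h := hm2 β
        calc d.a ^ (-m) * Yp d β
            = (d.a ^ (-m) * Yp d β * d.a ^ m) * d.a ^ (-m) := by group
        _ = Yp d (fun i => m2 * β i) * d.a ^ (-m) := by rw [h]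
      calc (d.x ^ m * d.a ^ m)⁻¹ * (d.x ^ α * Yp d β * d.a ^ s)
          = (d.a ^ m)⁻¹ * ((d.x ^ m)⁻¹ * d.x ^ α) * Yp d β * d.a ^ s := by group
      _ = (d.a ^ m)⁻¹ * d.x ^ (α - m) * Yp d β * d.a ^ s := by rw [e1]
      _ = d.a ^ (-m) * Yp d β * d.a ^ s := by rw [hx0, ← zpow_neg]; group
      _ = Yp d (fun i => m2 * β i) * d.a ^ (-m) * d.a ^ s := by rw [e2]
      _ = Yp d (fun i => m2 * β i) * d.a ^ (s - m) := by
            rw [mul_assoc, ← zpow_add]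
            congr 2
            ring
      _ = Yp d (fun i => m2 * β i) * d.a ^ (((2 ^ j : ℕ) : ℤ) * w) := by rw [← hw]
    rw [key]
    exact (Kform d j).mpr ⟨_, w, rfl⟩
  · -- the Shoda condition
    intro g hle
    obtain ⟨α, β, γ, s, t, rfl⟩ := exists_form d g
    cases t with
    | true =>
      exfalso
      have hx2 : d.x ^ (2 : ℤ) ∈ commSub
          (Subgroup.closure (({d.x, d.a} : Set G) ∪ Set.range d.y)) (Wz d α β γ s true) :=
        Subgroup.subset_closure ⟨d.x, hxH, (comm_gx d α β γ s).symm⟩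
      have hx2H : d.x ^ (2 : ℤ) ∈ Subgroup.closure (({d.x, d.a} : Set G) ∪ Set.range d.y) :=
        zpow_mem hxH 2
      have := hle ⟨hx2, hx2H⟩
      rw [x2_eq_Wz] at this
      refine not_in_K d ?_ 0 j this
      exact two_ne_zero_zmodp d
    | false =>
      by_cases hγ : ∀ i, ((γ i : ZMod d.p)) = 0
      · have : Wz d α β γ s false = Wz d α β 0 s false :=
          Wz_congr d Int.ModEq.rfl (fun i => Int.ModEq.rfl)
            (fun i => intcast_zero_modeq d (hγ i)) Int.ModEq.rfl
        rw [this]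
        exact (Hform d).mpr ⟨α, β, s, rfl⟩
      · exfalso
        push_neg at hγ
        obtain ⟨i, hi⟩ := hγ
        obtain ⟨m, hm⟩ := comm_gy d α β γ s i
        have hcm : d.y i ^ (1 - m) * d.x ^ ((-1) * γ i) ∈ commSub
            (Subgroup.closure (({d.x, d.a} : Set G) ∪ Set.range d.y))
            (Wz d α β γ s false) :=
          Subgroup.subset_closure ⟨d.y i, hyH i, hm.symm⟩
        have hcH : d.y i ^ (1 - m) * d.x ^ ((-1) * γ i)
            ∈ Subgroup.closure (({d.x, d.a} : Set G) ∪ Set.range d.y) :=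
          mul_mem (zpow_mem (hyH i) _) (zpow_mem hxH _)
        have hKmem := hle ⟨hcm, hcH⟩
        rw [yx_eq_Wz] at hKmem
        refine not_in_K d ?_ _ j hKmem
        intro h0
        apply hi
        have : (((-1) * γ i : ℤ) : ZMod d.p) = -(γ i : ZMod d.p) := by push_cast; ring
        rw [this] at h0
        exact neg_eq_zero.mp h0

/-! ### (b) forward direction -/

theorem comm_mem_of_cyclic {H K : Subgroup G} (hnorm : NormalIn H K)
    (hcyc : CyclicQuot H K) {g₁ g₂ : G} (h₁ : g₁ ∈ H) (h₂ : g₂ ∈ H) :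
    g₁ * g₂ * g₁⁻¹ * g₂⁻¹ ∈ K := by
  classical
  obtain ⟨h₀, h₀H, hh₀⟩ := hcyc
  haveI : (K.subgroupOf H).Normal := by
    constructor
    intro k hk u
    rw [Subgroup.mem_subgroupOf] at *
    have := hnorm (↑u⁻¹) (inv_mem u.2) (↑k) hk
    simpa using this
  set π := QuotientGroup.mk' (K.subgroupOf H) with hπ
  have key : ∀ (g : G) (hg : g ∈ H), ∃ mm : ℤ, π ⟨g, hg⟩ = π ⟨h₀, h₀H⟩ ^ mm := by
    intro g hg
    obtain ⟨mm, hmm⟩ := hh₀ g hg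
    refine ⟨mm, ?_⟩
    have hmem : ((⟨h₀, h₀H⟩ : H) ^ mm)⁻¹ * ⟨g, hg⟩ ∈ K.subgroupOf H := by
      rw [Subgroup.mem_subgroupOf]
      simpa using hmm
    have e4 : π (⟨h₀, h₀H⟩ ^ mm) = π ⟨g, hg⟩ :=
      (QuotientGroup.eq (s := K.subgroupOf H)).mpr hmem
    rw [← e4, map_zpow]
  obtain ⟨m1, hm1⟩ := key g₁ h₁
  obtain ⟨m2, hm2⟩ := key g₂ h₂
  have hcomm : π (⟨g₁, h₁⟩ * ⟨g₂, h₂⟩ * ⟨g₁, h₁⟩⁻¹ * ⟨g₂, h₂⟩⁻¹) = 1 := by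
    simp only [map_mul, map_inv, hm1, hm2]
    group
  have := (QuotientGroup.eq_one_iff _).mp hcomm
  rw [Subgroup.mem_subgroupOf] at this
  simpa using this

theorem zx_eq_Wz (i : Fin d.r) (c e : ℤ) :
    d.z i ^ c * d.x ^ e = Wz d e 0 (Pi.single i c) 0 false := by
  have h1 : Wz d e 0 (Pi.single i c) 0 false = d.x ^ e * d.z i ^ c := by
    rw [Wz, Yp_zero, Zp_single]
    simp
  rw [h1, ((cxz d i).zpow_zpow e c).eq]

theorem comm_zh (i : Fin d.r) (α : ℤ) (β : Fin d.r → ℤ) (s : ℤ) :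
    ∃ m : ℤ, (d.z i)⁻¹ * (Wz d α β 0 s false)⁻¹ * d.z i * Wz d α β 0 s false
      = d.z i ^ (m - 1) * d.x ^ (-(β i)) := by
  obtain ⟨m, hm⟩ := azpow_conj_z d (-s)
  rw [neg_neg] at hm
  refine ⟨m, ?_⟩
  rw [WH_eq]
  have h1 : (d.x ^ α)⁻¹ * d.z i * d.x ^ α = d.z i := by
    have hc : Commute (d.x ^ α) (d.z i) := (cxz d i).zpow_left α
    calc (d.x ^ α)⁻¹ * d.z i * d.x ^ α = (d.x ^ α)⁻¹ * (d.z i * d.x ^ α) := by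
          rw [mul_assoc]
    _ = (d.x ^ α)⁻¹ * (d.x ^ α * d.z i) := by rw [← hc.eq]
    _ = d.z i := by group
  have h2 : (Yp d β)⁻¹ * d.z i * Yp d β = d.z i * d.x ^ (-(β i)) := by
    have := Yp_conj_z d β i 1
    rw [zpow_one, mul_one] at this
    exact this
  have h3 : d.a ^ (-s) * (d.z i * d.x ^ (-(β i))) * d.a ^ s
      = d.z i ^ (m * 1) * d.x ^ (-(β i)) := by
    have hc : Commute (d.a ^ (-s)) (d.x ^ (-(β i))) := ((cxa d).symm.zpow_zpow (-s) _)
    have h5 := hm i 1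
    rw [zpow_one] at h5
    calc d.a ^ (-s) * (d.z i * d.x ^ (-(β i))) * d.a ^ s
        = (d.a ^ (-s) * d.z i * d.a ^ s) * (d.a ^ (-s) * d.x ^ (-(β i)) * d.a ^ s) := by
          group
    _ = d.z i ^ (m * 1) * (d.a ^ (-s) * d.x ^ (-(β i)) * d.a ^ s) := by rw [h5]
    _ = d.z i ^ (m * 1) * (d.x ^ (-(β i)) * d.a ^ (-s) * d.a ^ s) := by rw [hc.eq]
    _ = d.z i ^ (m * 1) * d.x ^ (-(β i)) := by group
  have expand : (d.z i)⁻¹ * (d.x ^ α * Yp d β * d.a ^ s)⁻¹ * d.z i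
      * (d.x ^ α * Yp d β * d.a ^ s)
      = (d.z i)⁻¹ * (d.a ^ (-s) * ((Yp d β)⁻¹ * ((d.x ^ α)⁻¹ * d.z i * d.x ^ α)
        * Yp d β) * d.a ^ s) := by
    rw [zpow_neg]
    group
  rw [expand, h1, h2, h3, mul_one]
  rw [show d.z i ^ (m - 1) = (d.z i)⁻¹ * d.z i ^ m by
    rw [← zpow_neg_one, ← zpow_add]; congr 1; ring]
  group

theorem x_notin_K {K : Subgroup G}
    (hmain : ∀ g : G,
      commSub (Subgroup.closure (({d.x, d.a} : Set G) ∪ Set.range d.y)) g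
        ⊓ Subgroup.closure (({d.x, d.a} : Set G) ∪ Set.range d.y) ≤ K → g ∈
          Subgroup.closure (({d.x, d.a} : Set G) ∪ Set.range d.y)) :
    d.x ∉ K := by
  set i0 : Fin d.r := ⟨0, lt_of_lt_of_le one_pos d.hr⟩ with hi0
  intro hxK
  have hz0 : d.z i0 ∉ Subgroup.closure (({d.x, d.a} : Set G) ∪ Set.range d.y) := by
    intro h
    obtain ⟨α, β, s, hform⟩ := (Hform d).mp h
    have e : d.z i0 = Wz d 0 0 (Pi.single i0 1) 0 false := by
      have := zx_eq_Wz d i0 1 0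
      rw [zpow_one, zpow_zero, mul_one] at this
      exact this
    rw [e] at hform
    obtain ⟨_, _, h3, _, _⟩ := Wz_unique d hform
    have h4 := h3 i0
    rw [Pi.single_eq_same] at h4
    rw [show (((0 : Fin d.r → ℤ) i0 : ℤ) : ZMod d.p) = 0 by simp] at h4
    exact one_ne_zero_zmodp d h4
  apply hz0
  apply hmain
  intro w hw
  obtain ⟨hw1, hw2⟩ := hw
  -- every element of commSub is of the form z^c x^e
  let M : Subgroup G :=
    { carrier := {u : G | ∃ c e : ℤ, u = d.z i0 ^ c * d.x ^ e}
      one_mem' := ⟨0, 0, by simp⟩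
      mul_mem' := by
        rintro u v ⟨c, e, rfl⟩ ⟨c', e', rfl⟩
        refine ⟨c + c', e + e', ?_⟩
        have hc : Commute (d.x ^ e) (d.z i0 ^ c') := (cxz d i0).zpow_zpow e c'
        calc d.z i0 ^ c * d.x ^ e * (d.z i0 ^ c' * d.x ^ e')
            = d.z i0 ^ c * (d.x ^ e * d.z i0 ^ c') * d.x ^ e' := by group
        _ = d.z i0 ^ c * (d.z i0 ^ c' * d.x ^ e) * d.x ^ e' := by rw [hc.eq]
        _ = d.z i0 ^ (c + c') * d.x ^ (e + e') := by
              rw [zpow_add, zpow_add]; group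
      inv_mem' := by
        rintro u ⟨c, e, rfl⟩
        refine ⟨-c, -e, ?_⟩
        have hc : Commute (d.x ^ (-e)) (d.z i0 ^ (-c)) := (cxz d i0).zpow_zpow _ _
        rw [mul_inv_rev, ← zpow_neg, ← zpow_neg, hc.eq] }
  have hMsub : commSub (Subgroup.closure (({d.x, d.a} : Set G) ∪ Set.range d.y))
      (d.z i0) ≤ M := by
    rw [commSub, Subgroup.closure_le]
    rintro w' ⟨h, hh, rfl⟩
    obtain ⟨α, β, s, rfl⟩ := (Hform d).mp hh
    obtain ⟨m, hm⟩ := comm_zh d i0 α β s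
    exact ⟨m - 1, -(β i0), hm⟩
  obtain ⟨c, e, rfl⟩ := hMsub hw1
  obtain ⟨α', β', s', hform⟩ := (Hform d).mp hw2
  rw [zx_eq_Wz] at hform ⊢
  obtain ⟨_, _, h3, _, _⟩ := Wz_unique d hform
  have h4 := h3 i0
  rw [Pi.single_eq_same] at h4
  rw [show (((0 : Fin d.r → ℤ) i0 : ℤ) : ZMod d.p) = 0 by simp] at h4
  have hz1 : d.z i0 ^ c = 1 := by
    rw [zpow_congr (d.hzp i0) (intcast_zero_modeq d h4), zpow_zero]
  rw [← zx_eq_Wz, hz1, one_mul]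
  exact zpow_mem hxK e

theorem powH (β : Fin d.r → ℤ) (σ : ℤ) (N : ℕ) :
    ∃ B, (Yp d β * d.a ^ σ) ^ N = Yp d B * d.a ^ (σ * N) := by
  induction N with
  | zero => exact ⟨0, by simp [Yp_zero]⟩
  | succ N ih =>
    obtain ⟨B, hB⟩ := ih
    obtain ⟨m, hm⟩ := azpow_conj_Yp d (σ * N)
    refine ⟨B + fun i => m * β i, ?_⟩
    rw [pow_succ, hB]
    have key : d.a ^ (σ * N) * Yp d β = Yp d (fun i => m * β i) * d.a ^ (σ * N) := by
      have h := hm β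
      calc d.a ^ (σ * N) * Yp d β
          = (d.a ^ (σ * N) * Yp d β * d.a ^ (-(σ * N))) * d.a ^ (σ * N) := by
            rw [zpow_neg]; group
      _ = Yp d (fun i => m * β i) * d.a ^ (σ * N) := by rw [h]
    calc Yp d B * d.a ^ (σ * N) * (Yp d β * d.a ^ σ)
        = Yp d B * (d.a ^ (σ * N) * Yp d β) * d.a ^ σ := by group
    _ = Yp d B * (Yp d (fun i => m * β i) * d.a ^ (σ * N)) * d.a ^ σ := by rw [key]
    _ = (Yp d B * Yp d (fun i => m * β i)) * (d.a ^ (σ * N) * d.a ^ σ) := by group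
    _ = Yp d (B + fun i => m * β i) * d.a ^ (σ * (N + 1)) := by
          rw [← Yp_add, ← zpow_add]
          congr 2
          push_cast
          ring

theorem forwardB {K : Subgroup G}
    (hS : IsShodaPair (Subgroup.closure (({d.x, d.a} : Set G) ∪ Set.range d.y)) K) :
    ∃ j, j ≤ d.n - 1 ∧
      K = Subgroup.closure (Set.range d.y ∪ ({d.a ^ 2 ^ j} : Set G)) := by
  obtain ⟨hKH, hnorm, hcyc, hmain⟩ := hS
  have haH : d.a ∈ Subgroup.closure (({d.x, d.a} : Set G) ∪ Set.range d.y) :=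
    Subgroup.subset_closure (Or.inl (Or.inr rfl))
  have hyH : ∀ i, d.y i ∈ Subgroup.closure (({d.x, d.a} : Set G) ∪ Set.range d.y) :=
    fun i => Subgroup.subset_closure (Or.inr (Set.mem_range_self i))
  have hxK : d.x ∉ K := x_notin_K d hmain
  have hyK : ∀ i, d.y i ∈ K := by
    intro i
    have hc := comm_mem_of_cyclic hnorm hcyc (inv_mem haH) (inv_mem (hyH i))
    rw [inv_inv, inv_inv] at hc
    rw [show d.a⁻¹ * (d.y i)⁻¹ * d.a * d.y i = d.y i ^ (1 - (d.k : ℤ)) from d.hay i] at hc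
    exact y_pow_recover d hc
  haveI : Fact d.p.Prime := ⟨d.hp⟩
  -- every element of K is of the form Yp B * a^σ
  have hKform : ∀ κ ∈ K, ∃ B, ∃ σ : ℤ, κ = Yp d B * d.a ^ σ := by
    intro κ hκ
    obtain ⟨α, β, σ, hform⟩ := (Hform d).mp (hKH hκ)
    rw [WH_eq] at hform
    set N : ℕ := 2 ^ (d.n - 1) with hN
    obtain ⟨B, hB⟩ := powH d β σ N
    have hcxu : Commute (d.x ^ α) (Yp d β * d.a ^ σ) :=
      ((cx_Yp d β).zpow_left α).mul_right ((cxa d).zpow_zpow α σ)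
    have hκN : κ ^ N = d.x ^ (α * N) * (Yp d B * d.a ^ (σ * N)) := by
      rw [hform, mul_assoc, hcxu.mul_pow, hB, ← zpow_natCast (d.x ^ α), ← zpow_mul]
    have haN : d.a ^ (σ * (N : ℤ)) = 1 := by
      rw [mul_comm, zpow_mul, zpow_natCast, hN, d.han, one_zpow]
    have hxN : d.x ^ (α * (N : ℤ)) ∈ K := by
      have h1 : κ ^ N * (Yp d B)⁻¹ = d.x ^ (α * N) := by
        rw [hκN, haN, mul_one]
        group
      rw [← h1]
      exact mul_mem (pow_mem hκ N) (inv_mem (Yp_mem d hyK B))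
    have hα0 : ((α : ZMod d.p)) = 0 := by
      have h2 := x_recover d hxK hxN
      have hcast : (((α * (N : ℤ)) : ℤ) : ZMod d.p)
          = (α : ZMod d.p) * (((N : ℤ) : ℤ) : ZMod d.p) := by push_cast; ring
      rw [hcast] at h2
      rcases mul_eq_zero.mp h2 with h3 | h3
      · exact h3
      · exfalso
        apply pow2_ne_zero_zmodp d (d.n - 1)
        exact_mod_cast h3
    have hx1 : d.x ^ α = 1 := by
      rw [zpow_congr d.hxp (intcast_zero_modeq d hα0), zpow_zero]
    refine ⟨β, σ, ?_⟩
    rw [hform, hx1, one_mul]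
  -- the subgroup of exponents
  let A : AddSubgroup ℤ :=
    { carrier := {σ : ℤ | d.a ^ σ ∈ K}
      zero_mem' := by
        show d.a ^ (0 : ℤ) ∈ K
        rw [zpow_zero]
        exact one_mem K
      add_mem' := by
        intro σ τ h1 h2
        show d.a ^ (σ + τ) ∈ K
        rw [zpow_add]
        exact mul_mem h1 h2
      neg_mem' := by
        intro σ h1
        show d.a ^ (-σ) ∈ K
        rw [zpow_neg]
        exact inv_mem h1 }
  have hNA : ((2 ^ (d.n - 1) : ℕ) : ℤ) ∈ A := by
    show d.a ^ (((2 ^ (d.n - 1) : ℕ)) : ℤ) ∈ K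
    rw [zpow_natCast, d.han]
    exact one_mem K
  obtain ⟨d₀, hd₀⟩ := Int.subgroup_cyclic A
  have hd₀A : d₀ ∈ A := by
    rw [hd₀]
    exact AddSubgroup.mem_closure_singleton.mpr ⟨1, one_zsmul d₀⟩
  have hdvd : d₀ ∣ ((2 ^ (d.n - 1) : ℕ) : ℤ) := by
    have h1 := hNA
    rw [hd₀] at h1
    obtain ⟨c, hc⟩ := AddSubgroup.mem_closure_singleton.mp h1
    exact ⟨c, by rw [← hc, smul_eq_mul]; ring⟩
  have habs : d₀.natAbs ∣ 2 ^ (d.n - 1) := by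
    have h1 := Int.natAbs_dvd_natAbs.mpr hdvd
    simp only [Int.natAbs_natCast] at h1
    exact h1
  obtain ⟨j, hj, hjeq⟩ := (Nat.dvd_prime_pow Nat.prime_two).mp habs
  refine ⟨j, hj, ?_⟩
  have habsA : ((d₀.natAbs : ℕ) : ℤ) ∈ A := by
    rcases Int.natAbs_eq d₀ with he | he
    · rw [← he]; exact hd₀A
    · have := A.neg_mem hd₀A
      rw [he] at this ⊢
      simpa using this
  have haj : d.a ^ (((2 ^ j : ℕ)) : ℤ) ∈ K := by
    rw [hjeq] at habsA
    exact habsA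
  apply le_antisymm
  · intro κ hκ
    obtain ⟨B, σ, rfl⟩ := hKform κ hκ
    have haσ : d.a ^ σ ∈ K := by
      have h1 := mul_mem (inv_mem (Yp_mem d hyK B)) hκ
      rwa [inv_mul_cancel_left] at h1
    have hσA : σ ∈ A := haσ
    have hd₀σ : d₀ ∣ σ := by
      rw [hd₀] at hσA
      obtain ⟨c, hc⟩ := AddSubgroup.mem_closure_singleton.mp hσA
      exact ⟨c, by rw [← hc, smul_eq_mul]; ring⟩
    have hdiv : ((2 ^ j : ℕ) : ℤ) ∣ σ := by
      rw [← hjeq]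
      exact Int.natAbs_dvd.mpr hd₀σ
    obtain ⟨w, hw⟩ := hdiv
    rw [hw]
    exact (Kform d j).mpr ⟨B, w, rfl⟩
  · rw [Subgroup.closure_le]
    rintro u hu
    rcases hu with ⟨i, rfl⟩ | hu
    · exact hyK i
    · rw [Set.mem_singleton_iff] at hu
      subst hu
      rw [show d.a ^ (2 ^ j : ℕ) = d.a ^ (((2 ^ j : ℕ)) : ℤ) from (zpow_natCast _ _).symm]
      exact haj

end SP

end Paper

/-- For `H = ⟨x, y₁, …, y_r, a⟩`: (a) the commutator subgroup of `H`
equals `⟨y₁, …, y_r⟩`; (b) for `K ≤ H`, the pair `(H,K)` is a Shoda pair of `G` iff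
`K = ⟨y₁, …, y_r, a^{2^j}⟩` for some `0 ≤ j ≤ n−1`. -/
theorem stmt16 {G : Type*} [Group G] [Fintype G] (d : Paper.GData G)
    (H : Subgroup G) (hH : H = Subgroup.closure (({d.x, d.a} : Set G) ∪ Set.range d.y)) :
    ⁅H, H⁆ = Subgroup.closure (Set.range d.y) ∧
    (∀ K : Subgroup G, K ≤ H →
      (Paper.IsShodaPair H K ↔
        ∃ j, j ≤ d.n - 1 ∧
          K = Subgroup.closure (Set.range d.y ∪ ({d.a ^ 2 ^ j} : Set G)))) := by
  subst hH
  constructor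
  · exact Paper.SP.partA d
  · intro K _hKle
    constructor
    · intro hS
      exact Paper.SP.forwardB d hS
    · rintro ⟨j, _hj, rfl⟩
      exact Paper.SP.shoda_Kj d j
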